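/- arXiv:1611.05386 — 7 statements merged into one kernel-verified Lean document; each statement's English description precedes it below -/
import Mathlib

section
/- Let Ω₁, Ω₂ be domains in ℂ and T : Hol(Ω₁) → Hol(Ω₂) a linear operator such that for every z ∈ Ω₂ the map f ↦ T(f)(z) is continuous on Hol(Ω₁) (with the topology of uniform convergence on compacta). Let U_T = {f ∈ Hol(Ω₁) : T(f) is unbounded on Ω₂}. Then either U_T is empty, or U_T is a dense G_δ subset of Hol(Ω₁). -/
open Set UniformOnFun Complex
open scoped UniformConvergence

noncomputable section

/-- The collection of compact subsets of `Ω`, used to define the topology of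
uniform convergence on compacta. -/
def cpts (Ω : Set ℂ) : Set (Set ℂ) := {K | K ⊆ Ω ∧ IsCompact K}

/-- The space `Hol(Ω)` of holomorphic functions on `Ω`, as a submodule of the space of
functions `ℂ → ℂ` equipped with the topology of uniform convergence on compact subsets
of `Ω`. -/
def Hol (Ω : Set ℂ) : Submodule ℂ (ℂ →ᵤ[cpts Ω] ℂ) where
  carrier := {f | DifferentiableOn ℂ (toFun (cpts Ω) f) Ω}
  add_mem' := fun hf hg => hf.add hg
  zero_mem' := differentiableOn_const 0
  smul_mem' := fun c f hf => hf.const_smul c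

/-- `g` is unbounded on `X`. -/
def UnbOn (g : ℂ → ℂ) (X : Set ℂ) : Prop := ¬ ∃ C : ℝ, ∀ z ∈ X, ‖g z‖ ≤ C

/-- Scalar multiplication on a fixed holomorphic function is continuous at `0`. -/
lemma tendsto_smul_aux (Ω : Set ℂ) (hΩ : IsOpen Ω) (g : Hol Ω) :
    Filter.Tendsto (fun c : ℂ => c • (g : ℂ →ᵤ[cpts Ω] ℂ)) (nhds 0) (nhds 0) := by
  rw [UniformOnFun.tendsto_iff_tendstoUniformlyOn]
  intro K hK
  obtain ⟨hKΩ, hKc⟩ := hK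
  have hgc : ContinuousOn (toFun (cpts Ω) g.1) K :=
    (g.2.continuousOn).mono hKΩ
  obtain ⟨M, hM⟩ := hKc.exists_bound_of_continuousOn hgc
  set M' : ℝ := max M 0 with hM'
  have hM'0 : 0 ≤ M' := le_max_right _ _
  rw [Metric.tendstoUniformlyOn_iff]
  intro ε hε
  have hδ : 0 < ε / (M' + 1) := by positivity
  filter_upwards [Metric.ball_mem_nhds (0 : ℂ) hδ] with c hc x hx
  have hcx : ‖c‖ < ε / (M' + 1) := by
    simpa [Metric.mem_ball, Complex.dist_eq] using hc
  have hgx : ‖toFun (cpts Ω) g.1 x‖ ≤ M' :=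
    le_trans (hM x hx) (le_max_left _ _)
  have : dist ((toFun (cpts Ω)) (0 : ℂ →ᵤ[cpts Ω] ℂ) x)
      ((toFun (cpts Ω)) (c • (g : ℂ →ᵤ[cpts Ω] ℂ)) x)
      = ‖c‖ * ‖toFun (cpts Ω) g.1 x‖ := by
    simp [Complex.dist_eq, map_mul]
  simp only [Function.comp_apply]
  rw [this]
  calc ‖c‖ * ‖toFun (cpts Ω) g.1 x‖
      ≤ ‖c‖ * M' := by
        exact mul_le_mul_of_nonneg_left hgx (norm_nonneg _)
    _ ≤ ‖c‖ * (M' + 1) := by nlinarith [norm_nonneg c]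
    _ < ε / (M' + 1) * (M' + 1) := by
        apply mul_lt_mul_of_pos_right hcx; linarith
    _ = ε := by field_simp

theorem stmt0 (Ω₁ Ω₂ : Set ℂ) (hΩ₁ : IsOpen Ω₁) (hΩ₁' : IsConnected Ω₁)
    (hΩ₂ : IsOpen Ω₂) (hΩ₂' : IsConnected Ω₂)
    (T : Hol Ω₁ →ₗ[ℂ] Hol Ω₂)
    (hT : ∀ z ∈ Ω₂, Continuous fun f : Hol Ω₁ => toFun (cpts Ω₂) (T f).1 z)
    (U : Set (Hol Ω₁))
    (hU : U = {f : Hol Ω₁ | UnbOn (toFun (cpts Ω₂) (T f).1) Ω₂}) :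
    U = ∅ ∨ (Dense U ∧ IsGδ U) := by
  rcases eq_empty_or_nonempty U with hUe | hUne
  · exact Or.inl hUe
  right
  constructor
  · -- Density
    obtain ⟨g, hg⟩ := hUne
    rw [dense_iff_closure_eq, eq_univ_iff_forall]
    intro f
    by_cases hf : f ∈ U
    · exact subset_closure hf
    -- f has bounded image; then f + c • g ∈ U for c ≠ 0
    have hfB : ∃ C : ℝ, ∀ z ∈ Ω₂, ‖toFun (cpts Ω₂) (T f).1 z‖ ≤ C := by
      rw [hU] at hf
      simpa [UnbOn] using hf
    have hgU : UnbOn (toFun (cpts Ω₂) (T g).1) Ω₂ := by rw [hU] at hg; exact hg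
    have key : ∀ c : ℂ, c ≠ 0 → f + c • g ∈ U := by
      intro c hc
      rw [hU]
      intro ⟨C₁, hC₁⟩
      obtain ⟨C₂, hC₂⟩ := hfB
      apply hgU
      refine ⟨(C₁ + C₂) / ‖c‖, fun z hz => ?_⟩
      have h1 : ‖toFun (cpts Ω₂) (T (f + c • g)).1 z‖ ≤ C₁ := hC₁ z hz
      have heq : toFun (cpts Ω₂) (T (f + c • g)).1 z
          = toFun (cpts Ω₂) (T f).1 z + c * toFun (cpts Ω₂) (T g).1 z := by
        rw [map_add, map_smul]; rfl
      have h2 := hC₂ z hz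
      have habs : ‖c‖ * ‖toFun (cpts Ω₂) (T g).1 z‖
          ≤ C₁ + C₂ := by
        have : c * toFun (cpts Ω₂) (T g).1 z
            = toFun (cpts Ω₂) (T (f + c • g)).1 z - toFun (cpts Ω₂) (T f).1 z := by
          rw [heq]; ring
        calc ‖c‖ * ‖toFun (cpts Ω₂) (T g).1 z‖
            = ‖c * toFun (cpts Ω₂) (T g).1 z‖ := (norm_mul _ _).symm
          _ = ‖toFun (cpts Ω₂) (T (f + c • g)).1 z
              - toFun (cpts Ω₂) (T f).1 z‖ := by rw [this]
          _ ≤ ‖toFun (cpts Ω₂) (T (f + c • g)).1 z‖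
              + ‖toFun (cpts Ω₂) (T f).1 z‖ := norm_sub_le _ _
          _ ≤ C₁ + C₂ := add_le_add h1 h2
      have hc0 : 0 < ‖c‖ := norm_pos_iff.mpr hc
      rw [le_div_iff₀ hc0]
      linarith [habs]
    -- f + c • g → f as c → 0 along punctured nhds
    have htend : Filter.Tendsto (fun c : ℂ => f + c • g) (nhdsWithin 0 {0}ᶜ) (nhds f) := by
      rw [tendsto_subtype_rng]
      have : Filter.Tendsto (fun c : ℂ => (f : ℂ →ᵤ[cpts Ω₁] ℂ) + c • (g : ℂ →ᵤ[cpts Ω₁] ℂ))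
          (nhds 0) (nhds ((f : ℂ →ᵤ[cpts Ω₁] ℂ) + 0)) :=
        (tendsto_smul_aux Ω₁ hΩ₁ g).const_add _
      rw [add_zero] at this
      exact (this.mono_left nhdsWithin_le_nhds).congr (fun c => rfl)
    exact mem_closure_of_tendsto htend
      (Filter.Eventually.mono eventually_mem_nhdsWithin fun c hc => key c hc)
  · -- Gδ
    rw [hU]
    have heq : {f : Hol Ω₁ | UnbOn (toFun (cpts Ω₂) (T f).1) Ω₂}
        = ⋂ n : ℕ, ⋃ z ∈ Ω₂,
          {f : Hol Ω₁ | (n : ℝ) < ‖toFun (cpts Ω₂) (T f).1 z‖} := by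
      ext f
      simp only [mem_setOf_eq, mem_iInter, mem_iUnion, UnbOn, not_exists, not_forall]
      constructor
      · intro h n
        obtain ⟨z, hz, hzlt⟩ := by
          have := h (n : ℝ)
          push_neg at this
          exact this
        exact ⟨z, hz, hzlt⟩
      · intro h C
        push_neg
        obtain ⟨n, hn⟩ := exists_nat_ge C
        obtain ⟨z, hz, hzlt⟩ := h n
        exact ⟨z, hz, lt_of_le_of_lt hn hzlt⟩
    rw [heq]
    apply IsGδ.iInter_of_isOpen
    intro n
    apply isOpen_biUnion
    intro z hz
    have : {f : Hol Ω₁ | (n : ℝ) < ‖toFun (cpts Ω₂) (T f).1 z‖}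
        = (fun f : Hol Ω₁ => ‖toFun (cpts Ω₂) (T f).1 z‖) ⁻¹' (Ioi (n : ℝ)) := rfl
    rw [this]
    exact isOpen_Ioi.preimage (continuous_norm.comp (hT z hz))
end
end

section
/- Let Ω₁, Ω₂ be domains in ℂ and for each n ∈ ℤ let T_n : Hol(Ω₁) → Hol(Ω₂) be a linear operator such that for every z ∈ Ω₂ the map f ↦ T_n(f)(z) is continuous. If for every n the set U_{T_n} = {f : T_n(f) is unbounded on Ω₂} is nonempty, then the intersection ⋂_{n∈ℤ} U_{T_n} is a dense G_δ subset of Hol(Ω₁). -/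
open Set UniformOnFun Complex
open scoped UniformConvergence

noncomputable section

lemma cpts_exhaustion {Ω : Set ℂ} (hΩ : IsOpen Ω) :
    ∃ t : ℕ → Set ℂ, (∀ n, t n ∈ cpts Ω) ∧ Monotone t ∧ ∀ s ∈ cpts Ω, ∃ n, s ⊆ t n := by
  haveI : LocallyCompactSpace Ω := hΩ.locallyCompactSpace
  let K := CompactExhaustion.choice Ω
  refine ⟨fun n => (↑) '' K n, fun n => ⟨?_, ?_⟩, ?_, ?_⟩
  · exact Subtype.coe_image_subset _ _
  · exact (K.isCompact n).image continuous_subtype_val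
  · intro m n h
    exact image_mono (K.subset h)
  · rintro s ⟨hsΩ, hs⟩
    have : IsCompact ((↑) ⁻¹' s : Set Ω) := by
      rw [Subtype.isCompact_iff]
      rwa [Subtype.image_preimage_coe, inter_eq_self_of_subset_right hsΩ]
    obtain ⟨n, hn⟩ := K.exists_superset_of_isCompact this
    refine ⟨n, fun z hz => ?_⟩
    exact ⟨⟨z, hsΩ hz⟩, hn hz, rfl⟩

lemma hol_countably_generated {Ω : Set ℂ} (hΩ : IsOpen Ω) :
    Filter.IsCountablyGenerated (uniformity (ℂ →ᵤ[cpts Ω] ℂ)) := by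
  obtain ⟨t, ht, hmono, hex⟩ := cpts_exhaustion hΩ
  exact UniformOnFun.isCountablyGenerated_uniformity _ ht hmono hex

lemma hol_isClosed {Ω : Set ℂ} (hΩ : IsOpen Ω) :
    IsClosed ((Hol Ω : Set (ℂ →ᵤ[cpts Ω] ℂ))) := by
  haveI := hol_countably_generated hΩ
  haveI : FirstCountableTopology (ℂ →ᵤ[cpts Ω] ℂ) := UniformSpace.firstCountableTopology _
  refine IsSeqClosed.isClosed ?_
  intro f g hf hfg
  rw [UniformOnFun.tendsto_iff_tendstoUniformlyOn] at hfg
  have h : TendstoLocallyUniformlyOn (fun n => toFun (cpts Ω) (f n)) (toFun (cpts Ω) g)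
      Filter.atTop Ω := by
    rw [tendstoLocallyUniformlyOn_iff_forall_isCompact hΩ]
    intro K hK hK'
    exact hfg K ⟨hK, hK'⟩
  exact h.differentiableOn (Filter.Eventually.of_forall hf) hΩ

set_option synthInstance.maxHeartbeats 1000000

theorem stmt1 (Ω₁ Ω₂ : Set ℂ) (hΩ₁ : IsOpen Ω₁) (hΩ₁' : IsConnected Ω₁)
    (hΩ₂ : IsOpen Ω₂) (hΩ₂' : IsConnected Ω₂)
    (T : ℤ → (Hol Ω₁ →ₗ[ℂ] Hol Ω₂))
    (hT : ∀ (n : ℤ), ∀ z ∈ Ω₂, Continuous fun f : Hol Ω₁ => toFun (cpts Ω₂) (T n f).1 z)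
    (U : ℤ → Set (Hol Ω₁))
    (hU : ∀ n : ℤ, U n = {f : Hol Ω₁ | UnbOn (toFun (cpts Ω₂) (T n f).1) Ω₂})
    (hne : ∀ n : ℤ, (U n).Nonempty) :
    Dense (⋂ n : ℤ, U n) ∧ IsGδ (⋂ n : ℤ, U n) := by
  haveI := hol_countably_generated hΩ₁
  haveI : CompleteSpace (Hol Ω₁) := (hol_isClosed hΩ₁).completeSpace_coe
  haveI : Filter.IsCountablyGenerated (uniformity (Hol Ω₁)) :=
    Filter.comap.isCountablyGenerated _ _
  haveI : ContinuousSMul ℂ (Hol Ω₁) := by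
    refine UniformOnFun.continuousSMul_submodule_of_image_bounded ℂ ℂ ℂ (Hol Ω₁) ?_
    rintro u hu s ⟨hsΩ, hs⟩
    rw [NormedSpace.isVonNBounded_iff]
    exact (hs.image_of_continuousOn ((hu.continuousOn).mono hsΩ)).isBounded
  haveI : IsTopologicalAddGroup (Hol Ω₁) := inferInstance
  haveI : BaireSpace (Hol Ω₁) := by
    letI := UniformSpace.pseudoMetricSpace (Hol Ω₁)
    exact BaireSpace.of_completelyPseudoMetrizable
  -- the open sets
  set E : ℤ → ℕ → Set (Hol Ω₁) :=
    fun n m => {f | ∃ z ∈ Ω₂, (m : ℝ) < ‖toFun (cpts Ω₂) (T n f).1 z‖} with hE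
  have hopen : ∀ n m, IsOpen (E n m) := by
    intro n m
    have : E n m = ⋃ z ∈ Ω₂,
        {f : Hol Ω₁ | (m : ℝ) < ‖toFun (cpts Ω₂) (T n f).1 z‖} := by
      ext f; simp [hE]
    rw [this]
    refine isOpen_biUnion fun z hz => ?_
    exact isOpen_lt continuous_const (continuous_norm.comp (hT n z hz))
  have hUE : ∀ n, U n = ⋂ m : ℕ, E n m := by
    intro n
    rw [hU n]
    ext f
    simp only [mem_setOf_eq, mem_iInter, hE]
    constructor
    · intro h m
      by_contra hm
      push_neg at hm
      exact h ⟨m, hm⟩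
    · rintro h ⟨C, hC⟩
      obtain ⟨z, hz, hzC⟩ := h ⌈max C 0⌉₊
      exact absurd (hC z hz) (by
        have : C ≤ (⌈max C 0⌉₊ : ℝ) := (le_max_left C 0).trans (Nat.le_ceil _)
        linarith)
  have hdense : ∀ n m, Dense (E n m) := by
    intro n m
    rw [dense_iff_inter_open]
    rintro V hV ⟨f₀, hf₀⟩
    by_contra hcon
    rw [not_nonempty_iff_eq_empty] at hcon
    have hbdd : ∀ f ∈ V, ∀ z ∈ Ω₂, ‖toFun (cpts Ω₂) (T n f).1 z‖ ≤ m := by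
      intro f hf z hz
      by_contra hlt
      push_neg at hlt
      exact Set.eq_empty_iff_forall_notMem.mp hcon f ⟨hf, z, hz, hlt⟩
    obtain ⟨g, hg⟩ := hne n
    rw [hU n] at hg
    have hcont : Filter.Tendsto (fun c : ℂ => f₀ + c • g) (nhds 0) (nhds f₀) := by
      have h1 : Filter.Tendsto (fun c : ℂ => c • g) (nhds 0) (nhds ((0 : ℂ) • g)) :=
        (continuous_id.smul continuous_const).tendsto 0
      rw [zero_smul] at h1
      simpa using (tendsto_const_nhds.add h1 :
        Filter.Tendsto (fun c : ℂ => f₀ + c • g) (nhds 0) (nhds (f₀ + 0)))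
    have hev : ∀ᶠ c : ℂ in nhds 0, f₀ + c • g ∈ V := hcont.eventually (hV.mem_nhds hf₀)
    obtain ⟨c, hcV, hc0⟩ :=
      ((hev.filter_mono nhdsWithin_le_nhds).and
        (eventually_mem_nhdsWithin (a := (0:ℂ)) (s := {(0:ℂ)}ᶜ))).exists
    rw [mem_compl_iff, mem_singleton_iff] at hc0
    have hcpos : 0 < ‖c‖ := norm_pos_iff.mpr hc0
    refine hg ⟨2 * m / ‖c‖, fun z hz => ?_⟩
    have h1 := hbdd f₀ hf₀ z hz
    have h2 := hbdd _ hcV z hz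
    have key : toFun (cpts Ω₂) (T n (f₀ + c • g)).1 z
        = toFun (cpts Ω₂) (T n f₀).1 z + c * toFun (cpts Ω₂) (T n g).1 z := by
      rw [map_add, map_smul]
      rfl
    rw [le_div_iff₀ hcpos, mul_comm, ← norm_mul]
    calc ‖c * toFun (cpts Ω₂) (T n g).1 z‖
        = ‖toFun (cpts Ω₂) (T n (f₀ + c • g)).1 z
            - toFun (cpts Ω₂) (T n f₀).1 z‖ := by rw [key]; ring_nf
      _ ≤ ‖toFun (cpts Ω₂) (T n (f₀ + c • g)).1 z‖
            + ‖toFun (cpts Ω₂) (T n f₀).1 z‖ := norm_sub_le _ _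
      _ ≤ m + m := add_le_add h2 h1
      _ = 2 * m := by ring
  have hiInter : (⋂ n : ℤ, U n) = ⋂ p : ℤ × ℕ, E p.1 p.2 := by
    ext f
    simp only [mem_iInter, hUE]
    exact ⟨fun h p => h p.1 p.2, fun h n m => h (n, m)⟩
  rw [hiInter]
  exact ⟨dense_iInter_of_isOpen (fun p => hopen p.1 p.2) (fun p => hdense p.1 p.2),
    IsGδ.iInter_of_isOpen fun p => hopen p.1 p.2⟩
end
end

section
/- Let Ω ⊆ ℂ be open and nonempty. Then the set A₀ of all holomorphic functions f on Ω that are bounded on Ω is a set of the first (meager) category in Hol(Ω). -/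
open Set UniformOnFun Complex
open scoped UniformConvergence

noncomputable section

/-- On any nonempty open `Ω ⊆ ℂ` there is a holomorphic function unbounded on `Ω`. -/
lemma exists_unbounded_holo (Ω : Set ℂ) (hΩ : IsOpen Ω) (hne : Ω.Nonempty) :
    ∃ h : ℂ → ℂ, DifferentiableOn ℂ h Ω ∧ ∀ C : ℝ, ∃ z ∈ Ω, C < ‖h z‖ := by
  by_cases hb : Bornology.IsBounded Ω
  · -- bounded case: use 1/(z - w) for a frontier point w
    have hfr : (frontier Ω).Nonempty := by
      rw [nonempty_iff_ne_empty]
      intro hfe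
      rcases isClopen_iff.mp (isClopen_iff_frontier_eq_empty.mpr hfe) with h' | h'
      · exact hne.ne_empty h'
      · obtain ⟨C, hC⟩ := isBounded_iff_forall_norm_le.mp hb
        have h1 := hC ((|C| + 1 : ℝ) : ℂ) (h' ▸ mem_univ _)
        rw [Complex.norm_real, Real.norm_eq_abs] at h1
        have h2 : |(|C| + 1)| = |C| + 1 := abs_of_pos (by positivity)
        rw [h2] at h1
        linarith [le_abs_self C]
    obtain ⟨w, hw⟩ := hfr
    have hwΩ : w ∉ Ω := by
      rw [frontier, hΩ.interior_eq] at hw; exact hw.2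
    have hwc : w ∈ closure Ω := hw.1
    refine ⟨fun z => (z - w)⁻¹, ?_, ?_⟩
    · intro z hz
      have hzw : z - w ≠ 0 := sub_ne_zero.mpr (fun h => hwΩ (h ▸ hz))
      exact (((differentiable_id.sub_const w) z).inv hzw).differentiableWithinAt
    · intro C
      have hδ : (0:ℝ) < (max C 0 + 1)⁻¹ := by positivity
      obtain ⟨z, hzΩ, hzd⟩ := Metric.mem_closure_iff.mp hwc _ hδ
      refine ⟨z, hzΩ, ?_⟩
      have hzw : z ≠ w := fun h => hwΩ (h ▸ hzΩ)
      have hpos : 0 < dist z w := dist_pos.mpr hzw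
      have : ‖(z - w)⁻¹‖ = (dist z w)⁻¹ := by
        rw [norm_inv, Complex.dist_eq]
      rw [this]
      have h1 : max C 0 + 1 < (dist z w)⁻¹ := by
        have h' : dist z w < (max C 0 + 1)⁻¹ := by rwa [dist_comm]
        have := one_div_lt_one_div_of_lt hpos h'
        rw [one_div, one_div, inv_inv] at this
        exact this
      calc C ≤ max C 0 := le_max_left _ _
        _ < (dist z w)⁻¹ := by linarith
  · -- unbounded case: use the identity
    refine ⟨id, differentiable_id.differentiableOn, fun C => ?_⟩
    rw [isBounded_iff_forall_norm_le] at hb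
    push_neg at hb
    obtain ⟨z, hz, hzC⟩ := hb C
    exact ⟨z, hz, by simpa using hzC⟩

lemma cpts_nonempty (Ω : Set ℂ) : (cpts Ω).Nonempty :=
  ⟨∅, empty_subset _, isCompact_empty⟩

lemma cpts_directed (Ω : Set ℂ) : DirectedOn (· ⊆ ·) (cpts Ω) :=
  fun K hK L hL => ⟨K ∪ L, ⟨union_subset hK.1 hL.1, hK.2.union hL.2⟩,
    subset_union_left, subset_union_right⟩

theorem stmt2 (Ω : Set ℂ) (hΩ : IsOpen Ω) (hne : Ω.Nonempty) :
    IsMeagre {f : Hol Ω | ∃ C : ℝ, ∀ z ∈ Ω, ‖toFun (cpts Ω) f.1 z‖ ≤ C} := by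
  set An : ℕ → Set (Hol Ω) :=
    fun n => {f : Hol Ω | ∀ z ∈ Ω, ‖toFun (cpts Ω) f.1 z‖ ≤ n} with hAn
  have hsub : {f : Hol Ω | ∃ C : ℝ, ∀ z ∈ Ω, ‖toFun (cpts Ω) f.1 z‖ ≤ C}
      ⊆ ⋃ n, An n := by
    rintro f ⟨C, hC⟩
    exact mem_iUnion.mpr ⟨⌈C⌉₊, fun z hz => (hC z hz).trans (Nat.le_ceil C)⟩
  refine IsMeagre.mono hsub (isMeagre_iUnion fun n => ?_)
  -- each `An n` is closed with empty interior
  have hclosed : IsClosed (An n) := by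
    have : An n = ⋂ z ∈ Ω, {f : Hol Ω | ‖toFun (cpts Ω) f.1 z‖ ≤ n} := by
      ext f; simp [hAn]
    rw [this]
    refine isClosed_biInter fun z hz => ?_
    have hev : Continuous fun f : Hol Ω => toFun (cpts Ω) f.1 z :=
      (UniformOnFun.uniformContinuous_eval_of_mem ℂ (cpts Ω) (mem_singleton z)
        ⟨singleton_subset_iff.mpr hz, isCompact_singleton⟩).continuous.comp
        continuous_subtype_val
    exact isClosed_le (continuous_norm.comp hev) continuous_const
  have hint : interior (An n) = ∅ := by
    by_contra hcon
    obtain ⟨f, hf⟩ := nonempty_iff_ne_empty.mpr hcon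
    have hfA : f ∈ An n := interior_subset hf
    have hmem : An n ∈ nhds f := mem_interior_iff_mem_nhds.mp hf
    rw [mem_nhds_subtype] at hmem
    obtain ⟨V, hV, hVsub⟩ := hmem
    obtain ⟨⟨K, ε⟩, ⟨hK, hε⟩, hgen⟩ :=
      ((UniformOnFun.hasBasis_nhds_of_basis ℂ ℂ (cpts Ω) f.1 (cpts_nonempty Ω)
        (cpts_directed Ω) Metric.uniformity_basis_dist).mem_iff.mp hV)
    obtain ⟨h, hdiff, hunb⟩ := exists_unbounded_holo Ω hΩ hne
    -- bound h on K
    obtain ⟨M₀, hM₀⟩ := hK.2.exists_bound_of_continuousOn (hdiff.continuousOn.mono hK.1)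
    set M : ℝ := max M₀ 0 with hM
    have hMnn : 0 ≤ M := le_max_right _ _
    have hMb : ∀ z ∈ K, ‖h z‖ ≤ M := fun z hz => by
      have := hM₀ z hz
      exact this.trans (le_max_left _ _)
    set c : ℝ := ε / (2 * (M + 1)) with hc
    have hcpos : 0 < c := by positivity
    -- the perturbed function
    set H : Hol Ω := ⟨ofFun (cpts Ω) h, hdiff⟩ with hH
    set g : Hol Ω := f + (c : ℂ) • H with hg
    have hgval : ∀ z : ℂ, toFun (cpts Ω) g.1 z = toFun (cpts Ω) f.1 z + c * h z := by
      intro z; rfl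
    have hgA : g ∈ An n := by
      apply hVsub
      apply hgen
      intro x hx
      have : dist (toFun (cpts Ω) g.1 x) (toFun (cpts Ω) f.1 x) = c * ‖h x‖ := by
        rw [hgval, Complex.dist_eq, add_sub_cancel_left, norm_mul, Complex.norm_real,
          Real.norm_eq_abs, abs_of_pos hcpos]
      show dist _ _ < ε
      rw [this]
      calc c * ‖h x‖ ≤ c * (M + 1) := by
            have := hMb x hx; nlinarith
        _ = ε / 2 := by rw [hc]; field_simp
        _ < ε := by linarith
    -- but g is unbounded
    obtain ⟨z, hzΩ, hz⟩ := hunb ((2 * n + 1) / c)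
    have h1 : ‖toFun (cpts Ω) f.1 z‖ ≤ n := hfA z hzΩ
    have h2 : ‖toFun (cpts Ω) g.1 z‖ ≤ n := hgA z hzΩ
    have h3 : c * ‖h z‖
        ≤ ‖toFun (cpts Ω) g.1 z‖ + ‖toFun (cpts Ω) f.1 z‖ := by
      have : ‖c * h z‖
          = ‖toFun (cpts Ω) g.1 z - toFun (cpts Ω) f.1 z‖ := by
        rw [hgval, add_sub_cancel_left]
      calc c * ‖h z‖ = ‖(c : ℂ) * h z‖ := by
            rw [norm_mul, Complex.norm_real, Real.norm_eq_abs, abs_of_pos hcpos]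
        _ = ‖toFun (cpts Ω) g.1 z - toFun (cpts Ω) f.1 z‖ := this
        _ ≤ _ := by
            exact norm_sub_le _ _
    have h4 : (2 * n + 1) < c * ‖h z‖ := by
      rw [div_lt_iff₀ hcpos] at hz
      linarith [mul_comm c (‖h z‖) ▸ hz]
    linarith
  exact isMeagre_iff_countable_union_isNowhereDense.mpr
    ⟨{An n}, by simpa using hclosed.isNowhereDense_iff.mpr hint,
      countable_singleton _, by simp⟩
end
end

section
/- Let Ω ⊆ ℂ be open and nonempty, and let k ≥ 1 be an integer. Then the set A_k of all holomorphic functions f on Ω whose k-th derivative f^{(k)} is bounded on Ω is a set of the first category in Hol(Ω). -/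
open Set UniformOnFun Complex
open scoped UniformConvergence

noncomputable section

namespace StmtAux

open Filter Metric Topology
open scoped Nat

variable {Ω : Set ℂ}

lemma cpts_nonempty : (cpts Ω).Nonempty := ⟨∅, empty_subset _, isCompact_empty⟩

lemma cpts_directed : DirectedOn (· ⊆ ·) (cpts Ω) := fun K1 h1 K2 h2 =>
  ⟨K1 ∪ K2, ⟨union_subset h1.1 h2.1, h1.2.union h2.2⟩, subset_union_left, subset_union_right⟩

lemma hol_diff (f : Hol Ω) : DifferentiableOn ℂ (toFun (cpts Ω) f.1) Ω := f.2

lemma mem_nhds_hol (f : Hol Ω) {K : Set ℂ} (hK : K ∈ cpts Ω) {ε : ℝ} (hε : 0 < ε) :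
    {g : Hol Ω | ∀ x ∈ K, dist (toFun (cpts Ω) g.1 x) (toFun (cpts Ω) f.1 x) < ε} ∈ 𝓝 f := by
  have hb := UniformOnFun.hasBasis_nhds ℂ ℂ (cpts Ω) f.1 cpts_nonempty cpts_directed
  have h1 : {g : ℂ →ᵤ[cpts Ω] ℂ |
      ∀ x ∈ K, dist (toFun (cpts Ω) g x) (toFun (cpts Ω) f.1 x) < ε} ∈ 𝓝 (f.1 : ℂ →ᵤ[cpts Ω] ℂ) := by
    rw [hb.mem_iff]
    exact ⟨(K, {p : ℂ × ℂ | dist p.1 p.2 < ε}), ⟨hK, dist_mem_uniformity hε⟩,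
      fun g hg x hx => hg x hx⟩
  have : 𝓝 f = Filter.comap (Subtype.val : Hol Ω → ℂ →ᵤ[cpts Ω] ℂ) (𝓝 f.1) := nhds_induced _ _
  rw [this]
  exact Filter.preimage_mem_comap h1

lemma cauchy_bound {g : ℂ → ℂ} {z : ℂ} {r δ : ℝ} (hr : 0 < r)
    (hg : DifferentiableOn ℂ g (closedBall z r)) (hbd : ∀ w ∈ closedBall z r, ‖g w‖ ≤ δ)
    (k : ℕ) : ‖iteratedDeriv k g z‖ ≤ (k ! : ℝ) * δ / r ^ k := by
  have hδ : 0 ≤ δ := le_trans (norm_nonneg _) (hbd z (mem_closedBall_self hr.le))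
  lift r to NNReal using hr.le with R
  have hR : 0 < R := by exact_mod_cast hr
  have hps : HasFPowerSeriesOnBall g (cauchyPowerSeries g z R) z R :=
    hg.hasFPowerSeriesOnBall hR
  have e1 : iteratedDeriv k g z = (k ! : ℂ) * ((cauchyPowerSeries g z R k) fun _ => 1) := by
    rw [iteratedDeriv_eq_iteratedFDeriv, ← hps.factorial_smul (y := (1 : ℂ)) k, nsmul_eq_mul]
  have hint : (∫ θ : ℝ in (0)..2 * Real.pi, ‖g (circleMap z R θ)‖) ≤ 2 * Real.pi * δ := by
    have hcont : ContinuousOn (fun θ : ℝ => ‖g (circleMap z R θ)‖) (uIcc 0 (2 * Real.pi)) := by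
      apply ContinuousOn.norm
      exact hg.continuousOn.comp (continuous_circleMap z R).continuousOn
        (fun θ _ => circleMap_mem_closedBall z hr.le θ)
    calc (∫ θ : ℝ in (0)..2 * Real.pi, ‖g (circleMap z R θ)‖)
        ≤ ∫ _ : ℝ in (0)..2 * Real.pi, δ := by
          apply intervalIntegral.integral_mono_on Real.two_pi_pos.le
            (hcont.intervalIntegrable) (intervalIntegrable_const)
          exact fun θ _ => hbd _ (circleMap_mem_closedBall z hr.le θ)
      _ = 2 * Real.pi * δ := by simp [mul_comm]
  have h2 : ‖cauchyPowerSeries g z R k‖ ≤ δ * ((R : ℝ))⁻¹ ^ k := by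
    refine (norm_cauchyPowerSeries_le g z R k).trans ?_
    rw [abs_of_pos hr]
    have hmain : (2 * Real.pi)⁻¹ * (∫ θ : ℝ in (0)..2 * Real.pi, ‖g (circleMap z R θ)‖) ≤ δ := by
      calc (2 * Real.pi)⁻¹ * ∫ θ : ℝ in (0)..2 * Real.pi, ‖g (circleMap z R θ)‖
          ≤ (2 * Real.pi)⁻¹ * (2 * Real.pi * δ) :=
            mul_le_mul_of_nonneg_left hint (inv_nonneg.2 Real.two_pi_pos.le)
        _ = δ := by field_simp
    exact mul_le_mul_of_nonneg_right hmain (by positivity)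
  have h3 : ‖(cauchyPowerSeries g z R k) fun _ => 1‖ ≤ ‖cauchyPowerSeries g z R k‖ := by
    have := (cauchyPowerSeries g z R k).le_opNorm fun _ => (1 : ℂ)
    simpa using this
  calc ‖iteratedDeriv k g z‖ = (k ! : ℝ) * ‖(cauchyPowerSeries g z R k) fun _ => 1‖ := by
        rw [e1, norm_mul]
        norm_num
    _ ≤ (k ! : ℝ) * (δ * ((R : ℝ))⁻¹ ^ k) := by
        gcongr
        exact h3.trans h2
    _ = (k ! : ℝ) * δ / (R : ℝ) ^ k := by
        rw [inv_pow]
        ring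
  
lemma iteratedDeriv_eq_within {f : ℂ → ℂ} (hΩ : IsOpen Ω) {z : ℂ} (hz : z ∈ Ω) (n : ℕ) :
    iteratedDeriv n f z = iteratedDerivWithin n f Ω z := by
  simp only [iteratedDeriv, iteratedDerivWithin, iteratedFDerivWithin_of_isOpen n hΩ hz]

lemma iter_sub (hΩ : IsOpen Ω) {f g : ℂ → ℂ} (hf : DifferentiableOn ℂ f Ω)
    (hg : DifferentiableOn ℂ g Ω) {z : ℂ} (hz : z ∈ Ω) (n : ℕ) :
    iteratedDeriv n (f - g) z = iteratedDeriv n f z - iteratedDeriv n g z := by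
  rw [iteratedDeriv_eq_within hΩ hz, iteratedDeriv_eq_within hΩ hz, iteratedDeriv_eq_within hΩ hz,
    iteratedDerivWithin_sub hz hΩ.uniqueDiffOn ((hf.contDiffOn hΩ).contDiffWithinAt hz)
      ((hg.contDiffOn hΩ).contDiffWithinAt hz)]

lemma iter_add_smul (hΩ : IsOpen Ω) {f g : ℂ → ℂ} (hf : DifferentiableOn ℂ f Ω)
    (hg : DifferentiableOn ℂ g Ω) (c : ℂ) {z : ℂ} (hz : z ∈ Ω) (n : ℕ) :
    iteratedDeriv n (f + c • g) z = iteratedDeriv n f z + c * iteratedDeriv n g z := by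
  have hcg : ContDiffOn ℂ (n : WithTop ℕ∞) (c • g) Ω := (hg.contDiffOn hΩ).const_smul c
  rw [iteratedDeriv_eq_within hΩ hz, iteratedDeriv_eq_within hΩ hz, iteratedDeriv_eq_within hΩ hz,
    iteratedDerivWithin_add hz hΩ.uniqueDiffOn ((hf.contDiffOn hΩ).contDiffWithinAt hz)
      (hcg.contDiffWithinAt hz),
    iteratedDerivWithin_const_smul hz hΩ.uniqueDiffOn c ((hg.contDiffOn hΩ).contDiffWithinAt hz),
      smul_eq_mul]

lemma cont_ev (hΩ : IsOpen Ω) {z : ℂ} (hz : z ∈ Ω) (k : ℕ) :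
    Continuous fun f : Hol Ω => iteratedDeriv k (toFun (cpts Ω) f.1) z := by
  rw [continuous_iff_continuousAt]
  intro f
  rw [ContinuousAt, Metric.tendsto_nhds]
  intro ε hε
  obtain ⟨r, hr, hrΩ⟩ : ∃ r > 0, closedBall z r ⊆ Ω :=
    (nhds_basis_closedBall.mem_iff).1 (hΩ.mem_nhds hz)
  have hK : closedBall z r ∈ cpts Ω := ⟨hrΩ, isCompact_closedBall z r⟩
  have hδ : 0 < ε / 2 * r ^ k / (k ! : ℝ) := by positivity
  filter_upwards [mem_nhds_hol f hK hδ] with g hg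
  have hdiff : DifferentiableOn ℂ (toFun (cpts Ω) g.1 - toFun (cpts Ω) f.1) (closedBall z r) :=
    ((hol_diff g).sub (hol_diff f)).mono hrΩ
  have hbd : ∀ w ∈ closedBall z r,
      ‖(toFun (cpts Ω) g.1 - toFun (cpts Ω) f.1) w‖ ≤ ε / 2 * r ^ k / (k ! : ℝ) := fun w hw =>
    le_of_lt (by simpa [dist_eq_norm] using hg w hw)
  have hb := cauchy_bound hr hdiff hbd k
  have heq : iteratedDeriv k (toFun (cpts Ω) g.1 - toFun (cpts Ω) f.1) z =
      iteratedDeriv k (toFun (cpts Ω) g.1) z - iteratedDeriv k (toFun (cpts Ω) f.1) z :=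
    iter_sub hΩ (hol_diff g) (hol_diff f) hz k
  rw [dist_eq_norm, ← heq]
  calc ‖iteratedDeriv k (toFun (cpts Ω) g.1 - toFun (cpts Ω) f.1) z‖
      ≤ (k ! : ℝ) * (ε / 2 * r ^ k / (k ! : ℝ)) / r ^ k := hb
    _ = ε / 2 := by field_simp
    _ < ε := by linarith

lemma En_closed (hΩ : IsOpen Ω) (k : ℕ) (n : ℝ) :
    IsClosed {f : Hol Ω | ∀ z ∈ Ω,
      ‖iteratedDeriv k (toFun (cpts Ω) f.1) z‖ ≤ n} := by
  have he : {f : Hol Ω | ∀ z ∈ Ω, ‖iteratedDeriv k (toFun (cpts Ω) f.1) z‖ ≤ n} =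
      ⋂ z ∈ Ω, {f : Hol Ω | ‖iteratedDeriv k (toFun (cpts Ω) f.1) z‖ ≤ n} := by
    ext f; simp
  rw [he]
  exact isClosed_biInter fun z hz => isClosed_le ((cont_ev hΩ hz k).norm) continuous_const

lemma exists_bad (hΩ : IsOpen Ω) (hne : Ω.Nonempty) {k : ℕ} (hk : 1 ≤ k) :
    ∃ h : ℂ → ℂ, DifferentiableOn ℂ h Ω ∧
      ∀ C : ℝ, ∃ z ∈ Ω, C < ‖iteratedDeriv k h z‖ := by
  by_cases huniv : Ω = univ
  · subst huniv
    refine ⟨fun z => z ^ (k + 1), (differentiable_pow (k + 1)).differentiableOn, fun C => ?_⟩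
    refine ⟨((max C 0 + 1 : ℝ) : ℂ), mem_univ _, ?_⟩
    rw [iteratedDeriv_eq_iterate, iter_deriv_pow]
    have hkk : k + 1 - k = 1 := by omega
    rw [hkk, pow_one, norm_mul]
    have h1 : (1 : ℝ) ≤ ‖∏ i ∈ Finset.range k, ((k + 1 : ℕ) - i : ℂ)‖ := by
      rw [norm_prod]
      have key : ∀ i ∈ Finset.range k, (1 : ℝ) ≤ ‖(k + 1 : ℕ) - (i : ℂ)‖ := by
        intro i hi
        rw [Finset.mem_range] at hi
        have hik : (i : ℝ) < k := by exact_mod_cast hi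
        have hcast : ((k + 1 : ℕ) - (i : ℂ)) = (((k : ℝ) + 1 - i : ℝ) : ℂ) := by push_cast; ring
        rw [hcast, Complex.norm_real, Real.norm_eq_abs]
        have habs : |(k : ℝ) + 1 - i| = (k : ℝ) + 1 - i := abs_of_nonneg (by linarith)
        rw [habs]
        linarith
      calc (1 : ℝ) = ∏ _i ∈ Finset.range k, (1 : ℝ) := by simp
        _ ≤ ∏ i ∈ Finset.range k, ‖(k + 1 : ℕ) - (i : ℂ)‖ :=
            Finset.prod_le_prod (fun i _ => zero_le_one) key
    have h2 : ‖((max C 0 + 1 : ℝ) : ℂ)‖ = max C 0 + 1 := by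
      rw [Complex.norm_real, Real.norm_eq_abs, abs_of_pos (by positivity)]
    have hC : C < max C 0 + 1 := lt_of_le_of_lt (le_max_left C 0) (by linarith)
    calc C < max C 0 + 1 := hC
      _ = 1 * (max C 0 + 1) := (one_mul _).symm
      _ ≤ ‖∏ i ∈ Finset.range k, ((k + 1 : ℕ) - i : ℂ)‖ *
          ‖((max C 0 + 1 : ℝ) : ℂ)‖ := by
          rw [h2]
          exact mul_le_mul_of_nonneg_right h1 (by positivity)
  · obtain ⟨b, hb⟩ : (frontier Ω).Nonempty := by
      by_contra hfr
      rw [not_nonempty_iff_eq_empty] at hfr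
      have : IsClopen Ω := isClopen_iff_frontier_eq_empty.2 hfr
      rcases isClopen_iff.1 this with h | h
      · exact hne.ne_empty h
      · exact huniv h
    have hbΩ : b ∉ Ω := by
      rw [frontier, hΩ.interior_eq] at hb
      exact hb.2
    have hbcl : b ∈ closure Ω := by
      rw [frontier, hΩ.interior_eq] at hb
      exact hb.1
    refine ⟨fun z => (z - b) ^ (-1 : ℤ), ?_, ?_⟩
    · intro z hz
      have hzb : z - b ≠ 0 := sub_ne_zero.2 fun h => hbΩ (h ▸ hz)
      exact ((differentiableAt_zpow.mpr (Or.inl hzb)).comp z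
        ((differentiableAt_id.sub (differentiableAt_const b)))).differentiableWithinAt
    · intro C
      set A := max C 0 + 1 with hA
      have hA0 : 0 < A := by positivity
      obtain ⟨z, hzΩ, hzd⟩ : ∃ z ∈ Ω, dist b z < min 1 A⁻¹ := by
        rw [Metric.mem_closure_iff] at hbcl
        exact hbcl _ (lt_min one_pos (by positivity))
      set d := ‖z - b‖ with hd
      have hd0 : 0 < d := by
        rw [hd]
        apply norm_pos_iff.2
        exact sub_ne_zero.2 fun h => hbΩ (h ▸ hzΩ)
      have hdd : d = dist b z := by rw [hd, dist_comm, Complex.dist_eq]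
      have hd1 : d ≤ 1 := le_of_lt (hdd ▸ lt_of_lt_of_le hzd (min_le_left _ _))
      have hdA : d < A⁻¹ := hdd ▸ lt_of_lt_of_le hzd (min_le_right _ _)
      refine ⟨z, hzΩ, ?_⟩
      have heq : iteratedDeriv k (fun z => (z - b) ^ (-1 : ℤ)) z =
          (∏ i ∈ Finset.range k, ((-1 : ℂ) - i)) * (z - b) ^ (-1 - k : ℤ) := by
        have hfeq : (fun z : ℂ => (z - b) ^ (-1 : ℤ)) =
            fun z : ℂ => (fun y : ℂ => y ^ (-1 : ℤ)) (z + -b) := by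
          funext w; rw [sub_eq_add_neg]
        rw [hfeq, iteratedDeriv_comp_add_const k (fun y : ℂ => y ^ (-1 : ℤ)) (-b)]
        simp only [iteratedDeriv_eq_iterate, iter_deriv_zpow, ← sub_eq_add_neg,
          Int.cast_neg, Int.cast_one, Int.cast_natCast]
      rw [heq, norm_mul]
      have hzpow : ‖(z - b) ^ (-1 - k : ℤ)‖ = (d ^ (k + 1))⁻¹ := by
        rw [norm_zpow, ← hd]
        rw [show (-1 - (k : ℤ)) = -((k + 1 : ℕ) : ℤ) by push_cast; ring]
        rw [zpow_neg, zpow_natCast]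
      have h1 : (1 : ℝ) ≤ ‖∏ i ∈ Finset.range k, ((-1 : ℂ) - i)‖ := by
        rw [norm_prod]
        have key : ∀ i ∈ Finset.range k, (1 : ℝ) ≤ ‖(-1 : ℂ) - (i : ℂ)‖ := by
          intro i _
          have hcast : ((-1 : ℂ) - (i : ℂ)) = ((-(1 + i) : ℝ) : ℂ) := by push_cast; ring
          rw [hcast, Complex.norm_real, Real.norm_eq_abs, abs_neg, abs_of_pos (by positivity)]
          have : (0:ℝ) ≤ i := Nat.cast_nonneg i
          linarith
        calc (1 : ℝ) = ∏ _i ∈ Finset.range k, (1 : ℝ) := by simp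
          _ ≤ ∏ i ∈ Finset.range k, ‖(-1 : ℂ) - (i : ℂ)‖ :=
              Finset.prod_le_prod (fun i _ => zero_le_one) key
      have hpow : d ^ (k + 1) ≤ d := pow_le_of_le_one hd0.le hd1 (Nat.succ_ne_zero k)
      have hdinv : A < d⁻¹ := by
        rw [← inv_inv A]
        exact inv_strictAnti₀ hd0 hdA
      calc C < A := lt_of_le_of_lt (le_max_left C 0) (by rw [hA]; linarith)
        _ < d⁻¹ := hdinv
        _ ≤ (d ^ (k + 1))⁻¹ := inv_anti₀ (by positivity) hpow
        _ = 1 * (d ^ (k + 1))⁻¹ := (one_mul _).symm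
        _ ≤ ‖∏ i ∈ Finset.range k, ((-1 : ℂ) - i)‖ *
            ‖(z - b) ^ (-1 - k : ℤ)‖ := by
            rw [hzpow]
            exact mul_le_mul_of_nonneg_right h1 (by positivity)

lemma En_interior (hΩ : IsOpen Ω) (hne : Ω.Nonempty) {k : ℕ} (hk : 1 ≤ k) (n : ℝ) :
    interior {f : Hol Ω | ∀ z ∈ Ω,
      ‖iteratedDeriv k (toFun (cpts Ω) f.1) z‖ ≤ n} = ∅ := by
  set E := {f : Hol Ω | ∀ z ∈ Ω, ‖iteratedDeriv k (toFun (cpts Ω) f.1) z‖ ≤ n} with hE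
  by_contra hcon
  obtain ⟨f, hf⟩ : (interior E).Nonempty := nonempty_iff_ne_empty.2 hcon
  have hmem : E ∈ 𝓝 f := mem_interior_iff_mem_nhds.1 hf
  -- extract a basic neighborhood
  have : 𝓝 f = Filter.comap (Subtype.val : Hol Ω → ℂ →ᵤ[cpts Ω] ℂ) (𝓝 f.1) := nhds_induced _ _
  rw [this, Filter.mem_comap] at hmem
  obtain ⟨t, ht, hts⟩ := hmem
  have hb := UniformOnFun.hasBasis_nhds ℂ ℂ (cpts Ω) f.1 cpts_nonempty cpts_directed
  rw [hb.mem_iff] at ht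
  obtain ⟨⟨K, V⟩, ⟨hK, hV⟩, hgen⟩ := ht
  obtain ⟨ε, hε, hεV⟩ := Metric.mem_uniformity_dist.1 hV
  have hball : ∀ g : Hol Ω,
      (∀ x ∈ K, dist (toFun (cpts Ω) g.1 x) (toFun (cpts Ω) f.1 x) < ε) → g ∈ E := by
    intro g hg
    apply hts
    apply hgen
    intro x hx
    exact hεV (hg x hx)
  obtain ⟨h, hdiff, hunb⟩ := exists_bad hΩ hne hk
  obtain ⟨M, hM⟩ : ∃ M, ∀ x ∈ K, ‖h x‖ ≤ M :=
    hK.2.exists_bound_of_continuousOn (hdiff.continuousOn.mono hK.1)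
  set A := max M 0 + 1 with hA
  have hA0 : 0 < A := by positivity
  set t₀ : ℝ := ε / (2 * A) with ht₀
  have ht₀0 : 0 < t₀ := by positivity
  set H : Hol Ω := ⟨UniformOnFun.ofFun (cpts Ω) h, hdiff⟩ with hH
  set g : Hol Ω := f + (t₀ : ℂ) • H with hg
  have hfE : f ∈ E := interior_subset hf
  have hgfun : ∀ x : ℂ, toFun (cpts Ω) g.1 x = toFun (cpts Ω) f.1 x + (t₀ : ℂ) * h x :=
    fun x => rfl
  have hgE : g ∈ E := by
    apply hball
    intro x hx
    rw [dist_eq_norm, hgfun x]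
    have : ‖toFun (cpts Ω) f.1 x + (t₀ : ℂ) * h x - toFun (cpts Ω) f.1 x‖ = t₀ * ‖h x‖ := by
      rw [add_sub_cancel_left, norm_mul, Complex.norm_real, Real.norm_of_nonneg ht₀0.le]
    rw [this]
    calc t₀ * ‖h x‖ ≤ t₀ * A := by
          apply mul_le_mul_of_nonneg_left _ ht₀0.le
          calc ‖h x‖ ≤ M := hM x hx
            _ ≤ A := by rw [hA]; have := le_max_left M 0; linarith
      _ = ε / 2 := by rw [ht₀]; field_simp
      _ < ε := by linarith
  -- derive boundedness of iteratedDeriv k h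
  have hbound : ∀ z ∈ Ω, t₀ * ‖iteratedDeriv k h z‖ ≤ 2 * n := by
    intro z hz
    have h1 := hfE z hz
    have h2 := hgE z hz
    have heq : iteratedDeriv k (toFun (cpts Ω) g.1) z =
        iteratedDeriv k (toFun (cpts Ω) f.1) z + (t₀ : ℂ) * iteratedDeriv k h z := by
      have hfun : toFun (cpts Ω) g.1 = toFun (cpts Ω) f.1 + (t₀ : ℂ) • h := funext hgfun
      rw [hfun]
      exact iter_add_smul hΩ (hol_diff f) hdiff _ hz k
    have h3 : ‖(t₀ : ℂ) * iteratedDeriv k h z‖ ≤ 2 * n := by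
      calc ‖(t₀ : ℂ) * iteratedDeriv k h z‖ =
          ‖iteratedDeriv k (toFun (cpts Ω) g.1) z -
            iteratedDeriv k (toFun (cpts Ω) f.1) z‖ := by rw [heq]; congr 1; ring
        _ ≤ ‖iteratedDeriv k (toFun (cpts Ω) g.1) z‖ +
            ‖iteratedDeriv k (toFun (cpts Ω) f.1) z‖ := by
            exact norm_sub_le _ _
        _ ≤ 2 * n := by linarith
    rw [norm_mul, Complex.norm_real, Real.norm_eq_abs, abs_of_pos ht₀0] at h3
    exact h3
  obtain ⟨z, hzΩ, hzgt⟩ := hunb (2 * n / t₀)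
  have := hbound z hzΩ
  rw [div_lt_iff₀ ht₀0] at hzgt
  nlinarith [hzgt, this]

end StmtAux

theorem stmt3 (Ω : Set ℂ) (hΩ : IsOpen Ω) (hne : Ω.Nonempty) (k : ℕ) (hk : 1 ≤ k) :
    IsMeagre {f : Hol Ω |
      ∃ C : ℝ, ∀ z ∈ Ω, ‖iteratedDeriv k (toFun (cpts Ω) f.1) z‖ ≤ C} := by
  have hsub : {f : Hol Ω |
      ∃ C : ℝ, ∀ z ∈ Ω, ‖iteratedDeriv k (toFun (cpts Ω) f.1) z‖ ≤ C} ⊆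
      ⋃ n : ℕ, {f : Hol Ω | ∀ z ∈ Ω,
        ‖iteratedDeriv k (toFun (cpts Ω) f.1) z‖ ≤ (n : ℝ)} := by
    rintro f ⟨C, hC⟩
    exact Set.mem_iUnion.2 ⟨⌈C⌉₊, fun z hz => (hC z hz).trans (Nat.le_ceil C)⟩
  refine IsMeagre.mono hsub ?_
  apply isMeagre_iUnion
  intro n
  rw [IsMeagre]
  apply residual_of_dense_open (StmtAux.En_closed hΩ k n).isOpen_compl
  rw [← interior_eq_empty_iff_dense_compl]
  exact StmtAux.En_interior hΩ hne hk (n : ℝ)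
end
end

section
/- Let Ω ⊆ ℂ be open and nonempty. Then the set E of all holomorphic functions f on Ω such that f^{(k)} is unbounded on Ω for every integer k ≥ 0 (with f^{(0)} = f) is a dense G_δ subset of Hol(Ω). -/
open Set UniformOnFun Complex
open scoped UniformConvergence

noncomputable section

section Aux

open Metric Filter Real Topology
open scoped Nat ENNReal

/-! ### Elementary lemmas on iterated derivatives -/

lemma myIDW_of_isOpen {s : Set ℂ} (hs : IsOpen s) {x : ℂ} (hx : x ∈ s) (n : ℕ) (f : ℂ → ℂ) :
    iteratedDerivWithin n f s x = iteratedDeriv n f x := by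
  simp only [iteratedDerivWithin, iteratedDeriv, iteratedFDerivWithin_of_isOpen n hs hx]

lemma myID_sub {Ω : Set ℂ} (hΩ : IsOpen Ω) {f g : ℂ → ℂ}
    (hf : DifferentiableOn ℂ f Ω) (hg : DifferentiableOn ℂ g Ω) {z : ℂ} (hz : z ∈ Ω) (k : ℕ) :
    iteratedDeriv k (f - g) z = iteratedDeriv k f z - iteratedDeriv k g z := by
  rw [← myIDW_of_isOpen hΩ hz, ← myIDW_of_isOpen hΩ hz k f, ← myIDW_of_isOpen hΩ hz k g,
    iteratedDerivWithin_sub hz hΩ.uniqueDiffOn (hf.contDiffOn hΩ z hz) (hg.contDiffOn hΩ z hz)]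

lemma myID_add_smul {Ω : Set ℂ} (hΩ : IsOpen Ω) {f g : ℂ → ℂ} (c : ℂ)
    (hf : DifferentiableOn ℂ f Ω) (hg : DifferentiableOn ℂ g Ω) {z : ℂ} (hz : z ∈ Ω) (k : ℕ) :
    iteratedDeriv k (f + c • g) z = iteratedDeriv k f z + c * iteratedDeriv k g z := by
  rw [← myIDW_of_isOpen hΩ hz, ← myIDW_of_isOpen hΩ hz k f, ← myIDW_of_isOpen hΩ hz k g,
    iteratedDerivWithin_add (f := f) (g := c • g) hz hΩ.uniqueDiffOn (hf.contDiffOn hΩ z hz)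
      ((hg.const_smul c).contDiffOn hΩ z hz),
    iteratedDerivWithin_const_smul hz hΩ.uniqueDiffOn c (hg.contDiffOn hΩ z hz)]
  simp

/-! ### The Cauchy estimate -/

lemma cauchy_bound {f : ℂ → ℂ} {c : ℂ} {R C : ℝ} (hR : 0 < R)
    (hf : DifferentiableOn ℂ f (closedBall c R))
    (hC : ∀ z ∈ closedBall c R, ‖f z‖ ≤ C) (n : ℕ) :
    ‖iteratedDeriv n f c‖ ≤ (n ! : ℝ) * C / R ^ n := by
  lift R to NNReal using hR.le with R
  have hR' : (0 : NNReal) < R := by exact_mod_cast hR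
  have hps := hf.hasFPowerSeriesOnBall hR'
  have h1 : iteratedDeriv n f c = n ! • (cauchyPowerSeries f c R n fun _ => (1:ℂ)) := by
    rw [iteratedDeriv_eq_iteratedFDeriv, ← hps.factorial_smul (1:ℂ) n]
  have hC0 : 0 ≤ C := le_trans (norm_nonneg _) (hC c (mem_closedBall_self hR.le))
  have hcont : Continuous fun θ : ℝ => ‖f (circleMap c R θ)‖ :=
    (hf.continuousOn.norm).comp_continuous (continuous_circleMap c R)
      (fun θ => sphere_subset_closedBall (circleMap_mem_sphere c hR.le θ))
  have hInt : (∫ θ : ℝ in (0)..2*π, ‖f (circleMap c R θ)‖) ≤ 2 * π * C := by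
    calc (∫ θ : ℝ in (0)..2*π, ‖f (circleMap c R θ)‖)
        ≤ ∫ _ : ℝ in (0)..2*π, C := by
          apply intervalIntegral.integral_mono_on Real.two_pi_pos.le
            (hcont.intervalIntegrable _ _) (intervalIntegrable_const)
          intro θ _; exact hC _ (sphere_subset_closedBall (circleMap_mem_sphere c hR.le θ))
      _ = 2 * π * C := by simp [mul_comm]
  have h2 : ‖cauchyPowerSeries f c R n‖ ≤ C * (R:ℝ)⁻¹ ^ n := by
    refine le_trans (norm_cauchyPowerSeries_le f c R n) ?_
    rw [_root_.abs_of_nonneg R.coe_nonneg]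
    apply mul_le_mul_of_nonneg_right _ (by positivity)
    calc (2*π)⁻¹ * ∫ θ : ℝ in (0)..2*π, ‖f (circleMap c R θ)‖
        ≤ (2*π)⁻¹ * (2*π*C) := by
          apply mul_le_mul_of_nonneg_left hInt (by positivity)
      _ = C := by field_simp
  have h3 : ‖cauchyPowerSeries f c R n fun _ => (1:ℂ)‖ ≤ C * (R:ℝ)⁻¹ ^ n := by
    refine le_trans ((cauchyPowerSeries f c R n).le_opNorm _) ?_
    simpa using h2
  rw [h1]
  rw [← Nat.cast_smul_eq_nsmul ℝ, norm_smul]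
  simp only [Real.norm_natCast]
  rw [div_eq_mul_inv, ← inv_pow, mul_assoc]
  refine mul_le_mul_of_nonneg_left ?_ (by positivity)
  simpa [NNReal.coe_inv] using h3

/-! ### Functions with unbounded iterated derivatives -/

lemma iter_deriv_inv_sub (b : ℂ) (k : ℕ) :
    ∀ z : ℂ, z ≠ b →
      iteratedDeriv k (fun w => (w - b)⁻¹) z = (-1)^k * (k ! : ℂ) * ((z - b)^(k+1))⁻¹ := by
  induction k with
  | zero => intro z hz; simp
  | succ k ih =>
    intro z hz
    have hzb : z - b ≠ 0 := sub_ne_zero.mpr hz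
    rw [iteratedDeriv_succ]
    have hev : iteratedDeriv k (fun w => (w - b)⁻¹) =ᶠ[nhds z]
        fun w => (-1)^k * (k ! : ℂ) * ((w - b)^(k+1))⁻¹ := by
      filter_upwards [isOpen_compl_singleton.mem_nhds (by simpa using hz)] with w hw
      exact ih w hw
    rw [hev.deriv_eq]
    have hd : HasDerivAt (fun w : ℂ => ((w - b)^(k+1))⁻¹)
        (-((k+1 : ℂ) * (z - b)^k * 1) / ((z - b)^(k+1))^2) z := by
      have h1 : HasDerivAt (fun w : ℂ => (w - b)^(k+1)) ((k+1 : ℂ) * (z - b)^k * 1) z := by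
        simpa [Function.comp_def] using (hasDerivAt_pow (k+1) (z - b)).comp z ((hasDerivAt_id z).sub_const b)
      exact h1.inv (pow_ne_zero _ hzb)
    rw [(hd.const_mul ((-1:ℂ)^k * (k ! : ℂ))).deriv]
    rw [Nat.factorial_succ]
    push_cast
    field_simp
    ring

lemma iter_deriv_cexp (k : ℕ) : iteratedDeriv k Complex.exp = Complex.exp := by
  induction k with
  | zero => simp
  | succ k ih => rw [iteratedDeriv_succ, ih, Complex.deriv_exp]

lemma exp_unb (M : ℝ) : ∃ z : ℂ, M < ‖Complex.exp z‖ := by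
  refine ⟨(max M 0 : ℝ), ?_⟩
  rw [Complex.norm_exp, Complex.ofReal_re]
  calc M ≤ max M 0 := le_max_left _ _
    _ < max M 0 + 1 := lt_add_one _
    _ ≤ Real.exp (max M 0) := Real.add_one_le_exp _

lemma inv_sub_unb {Ω : Set ℂ} {b : ℂ} (hb : b ∈ closure Ω) (hbΩ : b ∉ Ω) (k : ℕ) (M : ℝ) :
    ∃ z ∈ Ω, M < ‖iteratedDeriv k (fun w => (w - b)⁻¹) z‖ := by
  have hfact : (0:ℝ) < (k ! : ℝ) := by exact_mod_cast Nat.factorial_pos k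
  set ρ : ℝ := min 1 ((k ! : ℝ) / (|M| + 1)) with hρdef
  have hρpos : 0 < ρ := lt_min one_pos (by positivity)
  obtain ⟨z, hzΩ, hdz⟩ := Metric.mem_closure_iff.mp hb ρ hρpos
  have hzb : z ≠ b := by rintro rfl; exact hbΩ hzΩ
  have hzb' : z - b ≠ 0 := sub_ne_zero.mpr hzb
  have ha : 0 < ‖z - b‖ := norm_pos_iff.mpr hzb'
  have haρ : ‖z - b‖ < ρ := by rwa [← dist_eq_norm, dist_comm]
  refine ⟨z, hzΩ, ?_⟩
  rw [iter_deriv_inv_sub b k z hzb]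
  have h1 : ‖(-1:ℂ)^k * (k ! : ℂ) * ((z - b)^(k+1))⁻¹‖ = (k ! : ℝ) / ‖z - b‖^(k+1) := by
    simp [norm_mul, norm_pow, norm_inv, div_eq_mul_inv]
  rw [h1]
  have hpowpos : 0 < ‖z - b‖^(k+1) := pow_pos ha _
  have hpowlt : ‖z - b‖^(k+1) < (k ! : ℝ) / (|M| + 1) := by
    calc ‖z - b‖^(k+1) ≤ ‖z - b‖^1 :=
          pow_le_pow_of_le_one ha.le (le_of_lt (lt_of_lt_of_le haρ (min_le_left _ _))) (by omega)
      _ = ‖z - b‖ := pow_one _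
      _ < ρ := haρ
      _ ≤ (k ! : ℝ) / (|M| + 1) := min_le_right _ _
  have h2 : |M| + 1 < (k ! : ℝ) / ‖z - b‖^(k+1) := by
    rw [lt_div_iff₀ hpowpos]
    have := (lt_div_iff₀ (by positivity : (0:ℝ) < |M| + 1)).mp hpowlt
    linarith
  calc M ≤ |M| := le_abs_self M
    _ < |M| + 1 := lt_add_one _
    _ < _ := h2

/-! ### The exhaustion of `Ω` by compact sets and the Baire property -/

def exh (Ω : Set ℂ) (n : ℕ) : Set ℂ :=
  closedBall 0 n ∩ {z | ((n:ℝ≥0∞)+1)⁻¹ ≤ EMetric.infEdist z Ωᶜ}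

lemma exh_mem (Ω : Set ℂ) (n : ℕ) : exh Ω n ∈ cpts Ω := by
  constructor
  · rintro z ⟨-, hz2⟩
    by_contra hzΩ
    have : EMetric.infEdist z Ωᶜ = 0 := EMetric.infEdist_zero_of_mem hzΩ
    simp only [mem_setOf_eq, this, nonpos_iff_eq_zero, ENNReal.inv_eq_zero] at hz2
    exact (ENNReal.add_lt_top.mpr ⟨ENNReal.natCast_lt_top n, ENNReal.one_lt_top⟩).ne hz2
  · apply (isCompact_closedBall 0 n).inter_right
    exact isClosed_Ici.preimage EMetric.continuous_infEdist

lemma exh_mono (Ω : Set ℂ) : Monotone (exh Ω) := by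
  intro n m hnm
  refine inter_subset_inter ?_ ?_
  · exact closedBall_subset_closedBall (by exact_mod_cast hnm)
  · intro z hz
    simp only [mem_setOf_eq] at hz ⊢
    refine le_trans ?_ hz
    gcongr

lemma exh_cofinal (Ω : Set ℂ) (hΩ : IsOpen Ω) : ∀ K ∈ cpts Ω, ∃ n, K ⊆ exh Ω n := by
  rintro K ⟨hKΩ, hK⟩
  rcases K.eq_empty_or_nonempty with rfl | hKne
  · exact ⟨0, empty_subset _⟩
  obtain ⟨r, hr⟩ := hK.isBounded.subset_closedBall 0
  obtain ⟨z₀, hz₀K, hz₀min⟩ := hK.exists_isMinOn hKne EMetric.continuous_infEdist.continuousOn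
  have hpos : 0 < EMetric.infEdist z₀ Ωᶜ := by
    rw [pos_iff_ne_zero]
    intro h0
    have : z₀ ∈ closure Ωᶜ := EMetric.mem_closure_iff_infEdist_zero.mpr h0
    rw [hΩ.isClosed_compl.closure_eq] at this
    exact this (hKΩ hz₀K)
  obtain ⟨m, hm⟩ := ENNReal.exists_inv_nat_lt hpos.ne'
  obtain ⟨p, hp⟩ := exists_nat_ge r
  refine ⟨max m p, fun z hzK => ⟨?_, ?_⟩⟩
  · exact closedBall_subset_closedBall
      (le_trans hp (by exact_mod_cast le_max_right m p)) (hr hzK)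
  · have hmin : EMetric.infEdist z₀ Ωᶜ ≤ EMetric.infEdist z Ωᶜ := hz₀min hzK
    simp only [mem_setOf_eq]
    refine le_trans ?_ hmin
    refine le_trans ?_ hm.le
    have h1 : (m:ℝ≥0∞) ≤ (max m p : ℕ) := by exact_mod_cast le_max_left m p
    gcongr
    exact le_trans h1 (le_add_of_nonneg_right zero_le_one)

lemma Hol_isClosed (Ω : Set ℂ) (hΩ : IsOpen Ω) : IsClosed ((Hol Ω : Set (ℂ →ᵤ[cpts Ω] ℂ))) := by
  rw [← isOpen_compl_iff, isOpen_iff_mem_nhds]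
  intro f hf
  by_contra hnb
  have hcl : f ∈ closure (Hol Ω : Set (ℂ →ᵤ[cpts Ω] ℂ)) := by
    rw [mem_closure_iff_nhds]
    intro t ht
    by_contra hemp
    rw [not_nonempty_iff_eq_empty] at hemp
    exact hnb (mem_of_superset ht (fun g hg hgH => by
      have : g ∈ t ∩ (Hol Ω : Set _) := ⟨hg, hgH⟩
      simp [hemp] at this))
  have hne : (nhdsWithin f (Hol Ω : Set (ℂ →ᵤ[cpts Ω] ℂ))).NeBot :=
    mem_closure_iff_nhdsWithin_neBot.mp hcl
  set phi := nhdsWithin f (Hol Ω : Set (ℂ →ᵤ[cpts Ω] ℂ))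
  have htendsto : Tendsto (id : (ℂ →ᵤ[cpts Ω] ℂ) → (ℂ →ᵤ[cpts Ω] ℂ)) phi (nhds f) :=
    tendsto_id.mono_left nhdsWithin_le_nhds
  have huc : ∀ K ∈ cpts Ω, TendstoUniformlyOn (fun g : (ℂ →ᵤ[cpts Ω] ℂ) => toFun (cpts Ω) g)
      (toFun (cpts Ω) f) phi K :=
    (UniformOnFun.tendsto_iff_tendstoUniformlyOn).mp htendsto
  have hloc : TendstoLocallyUniformlyOn (fun g : (ℂ →ᵤ[cpts Ω] ℂ) => toFun (cpts Ω) g)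
      (toFun (cpts Ω) f) phi Ω := by
    rw [tendstoLocallyUniformlyOn_iff_forall_isCompact hΩ]
    intro K hKΩ hK
    exact huc K ⟨hKΩ, hK⟩
  have hdiff : ∀ᶠ g in phi, DifferentiableOn ℂ (toFun (cpts Ω) g) Ω := by
    filter_upwards [self_mem_nhdsWithin] with g hg
    exact hg
  exact hf (hloc.differentiableOn hdiff hΩ)

lemma baireHol (Ω : Set ℂ) (hΩ : IsOpen Ω) : BaireSpace (Hol Ω) := by
  haveI h1 : (uniformity (ℂ →ᵤ[cpts Ω] ℂ)).IsCountablyGenerated :=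
    UniformOnFun.isCountablyGenerated_uniformity (cpts Ω) (exh_mem Ω) (exh_mono Ω)
      (exh_cofinal Ω hΩ)
  haveI h2 : (uniformity (Hol Ω)).IsCountablyGenerated := by
    rw [uniformity_subtype]
    exact Filter.comap.isCountablyGenerated _ _
  haveI h3 : CompleteSpace (Hol Ω) := (Hol_isClosed Ω hΩ).completeSpace_coe
  exact BaireSpace.of_completelyPseudoMetrizable

/-! ### The basic open dense sets -/

def Vkn (Ω : Set ℂ) (k n : ℕ) : Set (Hol Ω) :=
  {f : Hol Ω | ∃ z ∈ Ω, (n:ℝ) < ‖iteratedDeriv k (toFun (cpts Ω) f.1) z‖}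

lemma Vkn_isOpen (Ω : Set ℂ) (hΩ : IsOpen Ω) (k n : ℕ) : IsOpen (Vkn Ω k n) := by
  rw [isOpen_iff_mem_nhds]
  rintro f₀ ⟨z, hzΩ, hgt⟩
  obtain ⟨ε, hε0, hball⟩ := Metric.isOpen_iff.mp hΩ z hzΩ
  set r : ℝ := ε/2 with hrdef
  have hr0 : 0 < r := by positivity
  have hcb : closedBall z r ⊆ Ω :=
    (closedBall_subset_ball (by simp [hrdef]; linarith)).trans hball
  set ε₀ : ℝ := ‖iteratedDeriv k (toFun (cpts Ω) f₀.1) z‖ - n with hε₀def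
  have hε₀pos : 0 < ε₀ := sub_pos.mpr hgt
  have hDpos : (0:ℝ) < (k ! : ℝ) / r ^ k := by positivity
  set δ : ℝ := ε₀ / (2 * ((k ! : ℝ) / r ^ k)) with hδdef
  have hδpos : 0 < δ := by positivity
  have hkey : (k ! : ℝ) * δ / r ^ k = ε₀ / 2 := by
    rw [hδdef]; field_simp
  set W : Set ((ℂ →ᵤ[cpts Ω] ℂ) × (ℂ →ᵤ[cpts Ω] ℂ)) :=
    UniformOnFun.gen (cpts Ω) (closedBall z r) {p : ℂ × ℂ | dist p.1 p.2 < δ} with hWdef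
  have hmemS : closedBall z r ∈ cpts Ω := ⟨hcb, isCompact_closedBall z r⟩
  have hWu : W ∈ uniformity (ℂ →ᵤ[cpts Ω] ℂ) :=
    UniformOnFun.gen_mem_uniformity _ _ hmemS (Metric.dist_mem_uniformity hδpos)
  have hWnhds : UniformSpace.ball (f₀ : ℂ →ᵤ[cpts Ω] ℂ) W ∈ nhds (f₀ : ℂ →ᵤ[cpts Ω] ℂ) :=
    UniformSpace.ball_mem_nhds _ hWu
  have hpre : Subtype.val ⁻¹' (UniformSpace.ball (f₀ : ℂ →ᵤ[cpts Ω] ℂ) W) ∈ nhds f₀ :=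
    (continuous_subtype_val.continuousAt).preimage_mem_nhds hWnhds
  refine mem_of_superset hpre ?_
  rintro g hg
  rw [Set.mem_preimage, UniformSpace.ball, Set.mem_preimage, hWdef, UniformOnFun.gen,
    Set.mem_setOf_eq] at hg
  have hg' : ∀ x ∈ closedBall z r, dist (toFun (cpts Ω) (f₀ : ℂ →ᵤ[cpts Ω] ℂ) x)
      (toFun (cpts Ω) (g : ℂ →ᵤ[cpts Ω] ℂ) x) < δ := hg
  -- the difference and its Cauchy estimate
  have hdiffsub : DifferentiableOn ℂ
      (toFun (cpts Ω) (g : ℂ →ᵤ[cpts Ω] ℂ) - toFun (cpts Ω) (f₀ : ℂ →ᵤ[cpts Ω] ℂ))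
      (closedBall z r) := ((g.2.sub f₀.2).mono hcb)
  have hbd : ∀ x ∈ closedBall z r,
      ‖(toFun (cpts Ω) (g : ℂ →ᵤ[cpts Ω] ℂ) - toFun (cpts Ω) (f₀ : ℂ →ᵤ[cpts Ω] ℂ)) x‖ ≤ δ := by
    intro x hx
    have := hg' x hx
    rw [dist_comm, dist_eq_norm] at this
    exact le_of_lt this
  have hest := cauchy_bound hr0 hdiffsub hbd k
  rw [hkey] at hest
  have hsub : iteratedDeriv k
      (toFun (cpts Ω) (g : ℂ →ᵤ[cpts Ω] ℂ) - toFun (cpts Ω) (f₀ : ℂ →ᵤ[cpts Ω] ℂ)) z =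
      iteratedDeriv k (toFun (cpts Ω) (g : ℂ →ᵤ[cpts Ω] ℂ)) z -
      iteratedDeriv k (toFun (cpts Ω) (f₀ : ℂ →ᵤ[cpts Ω] ℂ)) z :=
    myID_sub hΩ g.2 f₀.2 hzΩ k
  refine ⟨z, hzΩ, ?_⟩
  have htri : ‖iteratedDeriv k (toFun (cpts Ω) (f₀ : ℂ →ᵤ[cpts Ω] ℂ)) z‖ -
      ‖iteratedDeriv k (toFun (cpts Ω) (g : ℂ →ᵤ[cpts Ω] ℂ)) z‖ ≤ ε₀ / 2 := by
    refine le_trans ?_ hest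
    rw [hsub, norm_sub_rev]
    exact norm_sub_norm_le _ _
  have : (n:ℝ) = ‖iteratedDeriv k (toFun (cpts Ω) (f₀ : ℂ →ᵤ[cpts Ω] ℂ)) z‖ - ε₀ := by
    rw [hε₀def]; ring
  rw [this]
  linarith

lemma Vkn_dense (Ω : Set ℂ) (hΩ : IsOpen Ω) (hne : Ω.Nonempty) (k n : ℕ) :
    Dense (Vkn Ω k n) := by
  -- a holomorphic function on Ω whose k-th derivative is unbounded
  obtain ⟨h, hhd, hhu⟩ : ∃ h : ℂ → ℂ, DifferentiableOn ℂ h Ω ∧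
      ∀ M : ℝ, ∃ z ∈ Ω, M < ‖iteratedDeriv k h z‖ := by
    by_cases hU : Ω = univ
    · refine ⟨Complex.exp, Complex.differentiable_exp.differentiableOn, fun M => ?_⟩
      obtain ⟨z, hz⟩ := exp_unb M
      exact ⟨z, by rw [hU]; trivial, by rw [iter_deriv_cexp]; exact hz⟩
    · have hfr : (frontier Ω).Nonempty := nonempty_frontier_iff.mpr ⟨hne, hU⟩
      obtain ⟨b, hbcl, hbint⟩ := hfr
      rw [hΩ.interior_eq] at hbint
      refine ⟨fun w => (w - b)⁻¹, ?_, fun M => inv_sub_unb hbcl hbint k M⟩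
      exact DifferentiableOn.inv (differentiableOn_id.sub (differentiableOn_const b))
        (fun z hz => sub_ne_zero.mpr (fun hzb => hbint (hzb ▸ hz)))
  intro f₀
  by_cases hf₀ : f₀ ∈ Vkn Ω k n
  · exact subset_closure hf₀
  have hbd : ∀ z ∈ Ω, ‖iteratedDeriv k (toFun (cpts Ω) f₀.1) z‖ ≤ n := by
    intro z hz
    by_contra hlt
    exact hf₀ ⟨z, hz, lt_of_not_ge hlt⟩
  -- the perturbation as an element of Hol Ω
  have hHmem : (ofFun (cpts Ω) h) ∈ Hol Ω := hhd
  set H : Hol Ω := ⟨ofFun (cpts Ω) h, hHmem⟩ with hHdef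
  set g : ℕ → Hol Ω := fun m => f₀ + ((((m:ℝ)+1)⁻¹ : ℝ) : ℂ) • H with hgdef
  have hgval : ∀ m : ℕ, ∀ x : ℂ, toFun (cpts Ω) ((g m : Hol Ω) : ℂ →ᵤ[cpts Ω] ℂ) x =
      toFun (cpts Ω) (f₀ : ℂ →ᵤ[cpts Ω] ℂ) x + ((((m:ℝ)+1)⁻¹ : ℝ) : ℂ) * h x := fun m x => rfl
  -- each g m lies in Vkn
  have hgV : ∀ m : ℕ, g m ∈ Vkn Ω k n := by
    intro m
    have hcm : (0:ℝ) < ((m:ℝ)+1)⁻¹ := by positivity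
    obtain ⟨z, hzΩ, hzgt⟩ := hhu (((m:ℝ)+1) * (2*n + 1))
    refine ⟨z, hzΩ, ?_⟩
    have hval : iteratedDeriv k (toFun (cpts Ω) ((g m : Hol Ω) : ℂ →ᵤ[cpts Ω] ℂ)) z =
        iteratedDeriv k (toFun (cpts Ω) (f₀ : ℂ →ᵤ[cpts Ω] ℂ)) z +
          ((((m:ℝ)+1)⁻¹ : ℝ) : ℂ) * iteratedDeriv k h z := by
      have : toFun (cpts Ω) ((g m : Hol Ω) : ℂ →ᵤ[cpts Ω] ℂ) =
          toFun (cpts Ω) (f₀ : ℂ →ᵤ[cpts Ω] ℂ) + ((((m:ℝ)+1)⁻¹ : ℝ) : ℂ) • h := rfl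
      rw [this, myID_add_smul hΩ _ f₀.2 hhd hzΩ k]
    rw [hval]
    have h1 : (((m:ℝ)+1) : ℝ)⁻¹ * (((m:ℝ)+1) * (2*n + 1)) = 2*n+1 := by
      field_simp
    have h2 : ‖((((m:ℝ)+1)⁻¹ : ℝ) : ℂ) * iteratedDeriv k h z‖ > 2*n+1 := by
      rw [norm_mul]
      have hnc : ‖((((m:ℝ)+1)⁻¹ : ℝ) : ℂ)‖ = ((m:ℝ)+1)⁻¹ := by
        rw [Complex.norm_real, Real.norm_eq_abs, abs_of_pos hcm]
      rw [hnc, ← h1]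
      exact (mul_lt_mul_iff_right₀ hcm).mpr hzgt
    have h3 := hbd z hzΩ
    have h4 : ‖((((m:ℝ)+1)⁻¹ : ℝ) : ℂ) * iteratedDeriv k h z‖ ≤
        ‖iteratedDeriv k (toFun (cpts Ω) (f₀ : ℂ →ᵤ[cpts Ω] ℂ)) z +
          ((((m:ℝ)+1)⁻¹ : ℝ) : ℂ) * iteratedDeriv k h z‖ +
        ‖iteratedDeriv k (toFun (cpts Ω) (f₀ : ℂ →ᵤ[cpts Ω] ℂ)) z‖ := by
      simpa using norm_sub_le (iteratedDeriv k (toFun (cpts Ω) (f₀ : ℂ →ᵤ[cpts Ω] ℂ)) z +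
        ((((m:ℝ)+1)⁻¹ : ℝ) : ℂ) * iteratedDeriv k h z)
        (iteratedDeriv k (toFun (cpts Ω) (f₀ : ℂ →ᵤ[cpts Ω] ℂ)) z)
    linarith
  -- g m tends to f₀
  have htends : Tendsto g atTop (nhds f₀) := by
    rw [tendsto_subtype_rng]
    rw [UniformOnFun.tendsto_iff_tendstoUniformlyOn]
    rintro K ⟨hKΩ, hK⟩
    rw [Metric.tendstoUniformlyOn_iff]
    intro ε hε
    obtain ⟨C, hC⟩ := hK.exists_bound_of_continuousOn (hhd.continuousOn.mono hKΩ)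
    have hC1 : 0 < max C 1 := lt_of_lt_of_le one_pos (le_max_right _ _)
    obtain ⟨N, hN⟩ := exists_nat_gt (max C 1 / ε)
    rw [eventually_atTop]
    refine ⟨N, fun m hm x hx => ?_⟩
    simp only [Function.comp_apply]
    have hdist : dist (toFun (cpts Ω) (f₀ : ℂ →ᵤ[cpts Ω] ℂ) x)
        (toFun (cpts Ω) ((g m : Hol Ω) : ℂ →ᵤ[cpts Ω] ℂ) x)
        = ‖((((m:ℝ)+1)⁻¹ : ℝ) : ℂ)‖ * ‖h x‖ := by
      rw [hgval m x, dist_eq_norm]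
      rw [show toFun (cpts Ω) (f₀ : ℂ →ᵤ[cpts Ω] ℂ) x -
          (toFun (cpts Ω) (f₀ : ℂ →ᵤ[cpts Ω] ℂ) x + ((((m:ℝ)+1)⁻¹ : ℝ) : ℂ) * h x)
          = -(((((m:ℝ)+1)⁻¹ : ℝ) : ℂ) * h x) by ring, norm_neg, norm_mul]
    rw [hdist]
    have hnc : ‖((((m:ℝ)+1)⁻¹ : ℝ) : ℂ)‖ = ((m:ℝ)+1)⁻¹ := by
      rw [Complex.norm_real, Real.norm_eq_abs, abs_of_pos (by positivity)]
    rw [hnc]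
    have hhx : ‖h x‖ ≤ max C 1 := le_trans (hC x hx) (le_max_left _ _)
    have hm1 : (0:ℝ) < (m:ℝ) + 1 := by positivity
    have hNm : (N:ℝ) ≤ (m:ℝ) := by exact_mod_cast hm
    have hNe : max C 1 < ((m:ℝ)+1) * ε := by
      have h4 : max C 1 < (N:ℝ) * ε := (div_lt_iff₀ hε).mp hN
      nlinarith
    calc ((m:ℝ)+1)⁻¹ * ‖h x‖ ≤ ((m:ℝ)+1)⁻¹ * max C 1 := by gcongr
      _ < ε := by rwa [inv_mul_lt_iff₀ hm1]
  exact mem_closure_of_tendsto htends (Filter.Eventually.of_forall hgV)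

end Aux

theorem stmt4 (Ω : Set ℂ) (hΩ : IsOpen Ω) (hne : Ω.Nonempty)
    (E : Set (Hol Ω))
    (hE : E = {f : Hol Ω | ∀ k : ℕ, UnbOn (iteratedDeriv k (toFun (cpts Ω) f.1)) Ω}) :
    Dense E ∧ IsGδ E := by
  haveI := baireHol Ω hΩ
  have hE' : E = ⋂ p : ℕ × ℕ, Vkn Ω p.1 p.2 := by
    rw [hE]
    ext f
    simp only [Set.mem_iInter, Set.mem_setOf_eq, Vkn]
    constructor
    · intro hf p
      by_contra hcon
      push_neg at hcon
      exact hf p.1 ⟨p.2, fun z hz => by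
        have h1 := hcon z hz
        exact h1⟩
    · rintro hf k ⟨C, hC⟩
      obtain ⟨m, hm⟩ := exists_nat_ge C
      obtain ⟨z, hz, hgt⟩ := hf (k, m)
      have h2 := hC z hz
      have : (m:ℝ) < ‖iteratedDeriv k (toFun (cpts Ω) f.1) z‖ := hgt
      linarith
  constructor
  · rw [hE']
    exact dense_iInter_of_isOpen (fun p => Vkn_isOpen Ω hΩ p.1 p.2)
      (fun p => Vkn_dense Ω hΩ hne p.1 p.2)
  · rw [hE']
    exact IsGδ.iInter (fun p => (Vkn_isOpen Ω hΩ p.1 p.2).isGδ)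
end
end

section
/- Let Ω ⊆ ℂ be a simply connected domain, ζ₀ ∈ Ω, and k ≥ 1. Define T^{(k)}(f) to be the k-fold iterated antiderivative of f (each antiderivative vanishing at ζ₀). Then the set B_k of all f ∈ Hol(Ω) such that T^{(k)}(f) is bounded on Ω is a set of the first category in Hol(Ω). -/
open Set UniformOnFun Complex
open scoped UniformConvergence Topology Uniformity

noncomputable section

namespace Stmt6Aux

/-- The pointwise bound property: any antiderivative `H` (vanishing at `ζ₀`) of any `h`
is controlled at `z` by the sup of `h` on `K`, with constant `C`. -/
def PB (Ω : Set ℂ) (ζ₀ : ℂ) (K : Set ℂ) (C : ℝ) (z : ℂ) : Prop :=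
  ∀ h H : ℂ → ℂ, H ζ₀ = 0 → (∀ w ∈ Ω, HasDerivAt H (h w) w) →
    ∀ B : ℝ, (∀ w ∈ K, ‖h w‖ ≤ B) → ‖H z‖ ≤ C * B

/-- `(K, C)` is an admissible datum. -/
def Good (Ω : Set ℂ) (K : Set ℂ) (C : ℝ) : Prop :=
  K.Nonempty ∧ IsCompact K ∧ K ⊆ Ω ∧ 0 ≤ C

variable {Ω : Set ℂ} {ζ₀ : ℂ}

lemma PB.mono {K K' : Set ℂ} {C C' : ℝ} {z : ℂ} (hsub : K ⊆ K') (hC : C ≤ C')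
    (hKne : K.Nonempty) (hP : PB Ω ζ₀ K C z) : PB Ω ζ₀ K' C' z := by
  intro h H h0 hd B hB
  have hBK : ∀ w ∈ K, ‖h w‖ ≤ B := fun w hw => hB w (hsub hw)
  have hB0 : 0 ≤ B := (norm_nonneg _).trans (hBK _ hKne.choose_spec)
  exact (hP h H h0 hd B hBK).trans (mul_le_mul_of_nonneg_right hC hB0)

lemma PB.extend {K : Set ℂ} {C : ℝ} {a c z : ℂ} {r : ℝ}
    (hK : K.Nonempty) (hP : PB Ω ζ₀ K C a)
    (hball : Metric.closedBall c r ⊆ Ω) (hac : a ∈ Metric.closedBall c r)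
    (hzc : z ∈ Metric.closedBall c r) :
    PB Ω ζ₀ (K ∪ Metric.closedBall c r) (C + 2 * r) z := by
  intro h H h0 hd B hB
  have hBK : ∀ w ∈ K, ‖h w‖ ≤ B := fun w hw => hB w (Or.inl hw)
  obtain ⟨w₀, hw₀⟩ := hK
  have hB0 : 0 ≤ B := (norm_nonneg _).trans (hBK w₀ hw₀)
  have h1 : ‖H a‖ ≤ C * B := hP h H h0 hd B hBK
  have h2 : ‖H z - H a‖ ≤ B * ‖z - a‖ :=
    Convex.norm_image_sub_le_of_norm_hasDerivWithin_le (f' := h)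
      (fun x hx => (hd x (hball hx)).hasDerivWithinAt)
      (fun x hx => hB x (Or.inr hx)) (convex_closedBall c r) hac hzc
  have h3 : ‖z - a‖ ≤ 2 * r := by
    calc ‖z - a‖ = dist z a := (dist_eq_norm _ _).symm
    _ ≤ dist z c + dist a c := dist_triangle_right _ _ _
    _ ≤ r + r := add_le_add (Metric.mem_closedBall.1 hzc) (Metric.mem_closedBall.1 hac)
    _ = 2 * r := by ring
  have h4 : ‖H z - H a‖ ≤ B * (2 * r) :=
    h2.trans (mul_le_mul_of_nonneg_left h3 hB0)
  calc ‖H z‖ ≤ ‖H a‖ + ‖H z - H a‖ := by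
        simpa using norm_add_le (H a) (H z - H a)
  _ ≤ C * B + B * (2 * r) := add_le_add h1 h4
  _ = (C + 2 * r) * B := by ring

/-- Around each point of `Ω` there is a neighbourhood on which a single admissible
bound datum works. -/
lemma exists_nbhd_bound (hΩ : IsOpen Ω) (hΩ' : IsConnected Ω) (hζ₀ : ζ₀ ∈ Ω) :
    ∀ z ∈ Ω, ∃ (r : ℝ) (K : Set ℂ) (C : ℝ), 0 < r ∧ Metric.closedBall z r ⊆ Ω ∧
      Good Ω K C ∧ ∀ y ∈ Metric.closedBall z r, PB Ω ζ₀ K C y := by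
  set A : Set ℂ := {z | z ∈ Ω ∧ ∃ K C, Good Ω K C ∧ PB Ω ζ₀ K C z} with hA
  have hopen : IsOpen A := by
    rw [Metric.isOpen_iff]
    rintro z ⟨hzΩ, K, C, ⟨hKne, hKc, hKΩ, hC⟩, hPB⟩
    obtain ⟨r, hr, hball⟩ : ∃ r > 0, Metric.closedBall z r ⊆ Ω :=
      (Metric.nhds_basis_closedBall.mem_iff).1 (hΩ.mem_nhds hzΩ)
    refine ⟨r, hr, fun y hy => ?_⟩
    have hy' : y ∈ Metric.closedBall z r := Metric.ball_subset_closedBall hy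
    exact ⟨hball hy', K ∪ Metric.closedBall z r, C + 2 * r,
      ⟨hKne.mono subset_union_left, hKc.union (isCompact_closedBall _ _),
        union_subset hKΩ hball, by positivity⟩,
      hPB.extend hKne hball (Metric.mem_closedBall_self hr.le) hy'⟩
  have hclos : closure A ∩ Ω ⊆ A := by
    rintro z ⟨hcl, hzΩ⟩
    obtain ⟨r, hr, hball⟩ : ∃ r > 0, Metric.closedBall z r ⊆ Ω :=
      (Metric.nhds_basis_closedBall.mem_iff).1 (hΩ.mem_nhds hzΩ)
    obtain ⟨a, haA, har⟩ := Metric.mem_closure_iff.1 hcl r hr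
    rcases haA with ⟨haΩ, K, C, ⟨hKne, hKc, hKΩ, hC⟩, hPB⟩
    have haz : a ∈ Metric.closedBall z r := by
      rw [Metric.mem_closedBall, dist_comm]; exact har.le
    exact ⟨hzΩ, K ∪ Metric.closedBall z r, C + 2 * r,
      ⟨hKne.mono subset_union_left, hKc.union (isCompact_closedBall _ _),
        union_subset hKΩ hball, by positivity⟩,
      hPB.extend hKne hball haz (Metric.mem_closedBall_self hr.le)⟩
  have hζA : ζ₀ ∈ A := by
    refine ⟨hζ₀, {ζ₀}, 0, ⟨singleton_nonempty _, isCompact_singleton,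
      singleton_subset_iff.2 hζ₀, le_refl 0⟩, ?_⟩
    intro h H h0 hd B hB
    rw [h0]; simp
  have hΩA : Ω ⊆ A :=
    hΩ'.isPreconnected.subset_of_closure_inter_subset hopen ⟨ζ₀, hζ₀, hζA⟩ hclos
  intro z hz
  obtain ⟨-, K, C, ⟨hKne, hKc, hKΩ, hC⟩, hPB⟩ := hΩA hz
  obtain ⟨r, hr, hball⟩ : ∃ r > 0, Metric.closedBall z r ⊆ Ω :=
    (Metric.nhds_basis_closedBall.mem_iff).1 (hΩ.mem_nhds hz)
  refine ⟨r, K ∪ Metric.closedBall z r, C + 2 * r, hr, hball,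
    ⟨hKne.mono subset_union_left, hKc.union (isCompact_closedBall _ _),
      union_subset hKΩ hball, by positivity⟩, fun y hy =>
    hPB.extend hKne hball (Metric.mem_closedBall_self hr.le) hy⟩

/-- Uniform version on compact subsets. -/
lemma exists_compact_bound (hΩ : IsOpen Ω) (hΩ' : IsConnected Ω) (hζ₀ : ζ₀ ∈ Ω)
    {K₀ : Set ℂ} (hc : IsCompact K₀) (hsub : K₀ ⊆ Ω) (hne : K₀.Nonempty) :
    ∃ K C, Good Ω K C ∧ ∀ z ∈ K₀, PB Ω ζ₀ K C z := by
  have key : ∀ z : ℂ, ∃ (r : ℝ) (K : Set ℂ) (C : ℝ), z ∈ Ω →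
      (0 < r ∧ Good Ω K C ∧ ∀ y ∈ Metric.closedBall z r, PB Ω ζ₀ K C y) := by
    intro z
    by_cases hz : z ∈ Ω
    · obtain ⟨r, K, C, h1, _, h3, h4⟩ := exists_nbhd_bound hΩ hΩ' hζ₀ z hz
      exact ⟨r, K, C, fun _ => ⟨h1, h3, h4⟩⟩
    · exact ⟨1, {ζ₀}, 0, fun h => absurd h hz⟩
  choose r K C hP using key
  obtain ⟨t, htsub, htcov⟩ := hc.elim_nhds_subcover (fun z => Metric.ball z (r z))
    (fun z hz => Metric.ball_mem_nhds z (hP z (hsub hz)).1)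
  obtain ⟨x₀, hx₀⟩ := hne
  obtain ⟨z₀, hz₀t, -⟩ := Set.mem_iUnion₂.1 (htcov hx₀)
  refine ⟨⋃ z ∈ t, K z, ∑ z ∈ t, C z, ⟨?_, ?_, ?_, ?_⟩, ?_⟩
  · exact ((hP z₀ (hsub (htsub z₀ hz₀t))).2.1.1).mono (Set.subset_biUnion_of_mem hz₀t)
  · exact t.finite_toSet.isCompact_biUnion
      (fun z hz => (hP z (hsub (htsub z hz))).2.1.2.1)
  · exact Set.iUnion₂_subset fun z hz => (hP z (hsub (htsub z hz))).2.1.2.2.1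
  · exact Finset.sum_nonneg fun z hz => (hP z (hsub (htsub z hz))).2.1.2.2.2
  · intro y hy
    obtain ⟨z, hzt, hyz⟩ := Set.mem_iUnion₂.1 (htcov hy)
    have hzΩ := hsub (htsub z hzt)
    have hPB := (hP z hzΩ).2.2 y (Metric.ball_subset_closedBall hyz)
    refine hPB.mono (Set.subset_biUnion_of_mem hzt) ?_ (hP z hzΩ).2.1.1
    exact Finset.single_le_sum (fun w hw => (hP w (hsub (htsub w hw))).2.1.2.2.2) hzt

/-- Uniqueness: a function with zero derivative on `Ω` and vanishing at `ζ₀`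
vanishes on `Ω`. -/
lemma eq_zero_of_deriv_zero (hΩ : IsOpen Ω) (hΩ' : IsConnected Ω) (hζ₀ : ζ₀ ∈ Ω)
    {H : ℂ → ℂ} (h0 : H ζ₀ = 0) (hd : ∀ w ∈ Ω, HasDerivAt H 0 w) :
    ∀ z ∈ Ω, H z = 0 := by
  intro z hz
  obtain ⟨r, K, C, hr, -, -, hPB⟩ := exists_nbhd_bound hΩ hΩ' hζ₀ z hz
  have := hPB z (Metric.mem_closedBall_self hr.le) (fun _ => 0) H h0 hd 0 (by simp)
  rw [mul_zero] at this
  exact norm_le_zero_iff.1 this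

end Stmt6Aux

namespace Stmt6Aux

variable {Ω : Set ℂ} {ζ₀ : ℂ}

/-- Iterated Lipschitz-type bound for `T^[j]`. -/
lemma iter_bound (hΩ : IsOpen Ω) (hΩ' : IsConnected Ω) (hζ₀ : ζ₀ ∈ Ω)
    (T : Hol Ω → Hol Ω)
    (hT : ∀ f : Hol Ω, toFun (cpts Ω) (T f).1 ζ₀ = 0 ∧
      ∀ z ∈ Ω, HasDerivAt (toFun (cpts Ω) (T f).1) (toFun (cpts Ω) f.1 z) z) :
    ∀ (j : ℕ) (K₀ : Set ℂ), IsCompact K₀ → K₀ ⊆ Ω → K₀.Nonempty →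
      ∃ K C, Good Ω K C ∧ ∀ (f g : Hol Ω) (B : ℝ),
        (∀ w ∈ K, ‖toFun (cpts Ω) f.1 w - toFun (cpts Ω) g.1 w‖ ≤ B) →
        ∀ z ∈ K₀, ‖toFun (cpts Ω) (T^[j] f).1 z - toFun (cpts Ω) (T^[j] g).1 z‖ ≤ C * B := by
  intro j
  induction j with
  | zero =>
    intro K₀ hc hs hne
    refine ⟨K₀, 1, ⟨hne, hc, hs, one_pos.le⟩, ?_⟩
    intro f g B hB z hz
    simpa using hB z hz
  | succ j ih =>
    intro K₀ hc hs hne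
    obtain ⟨K₁, C₁, hG₁, hP₁⟩ := exists_compact_bound hΩ hΩ' hζ₀ hc hs hne
    obtain ⟨K, C₂, hG, hP₂⟩ := ih K₁ hG₁.2.1 hG₁.2.2.1 hG₁.1
    refine ⟨K, C₁ * C₂, ⟨hG.1, hG.2.1, hG.2.2.1, mul_nonneg hG₁.2.2.2 hG.2.2.2⟩, ?_⟩
    intro f g B hB z hz
    have hder : ∀ w ∈ Ω, HasDerivAt
        (fun x => toFun (cpts Ω) (T^[j+1] f).1 x - toFun (cpts Ω) (T^[j+1] g).1 x)
        (toFun (cpts Ω) (T^[j] f).1 w - toFun (cpts Ω) (T^[j] g).1 w) w := by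
      intro w hw
      rw [Function.iterate_succ_apply', Function.iterate_succ_apply']
      exact ((hT (T^[j] f)).2 w hw).sub ((hT (T^[j] g)).2 w hw)
    have h0 : (fun x => toFun (cpts Ω) (T^[j+1] f).1 x
        - toFun (cpts Ω) (T^[j+1] g).1 x) ζ₀ = 0 := by
      simp only [Function.iterate_succ_apply']
      rw [(hT (T^[j] f)).1, (hT (T^[j] g)).1, sub_zero]
    have hbound := hP₁ z hz _ _ h0 hder (C₂ * B) (fun w hw => hP₂ f g B hB w hw)
    calc ‖toFun (cpts Ω) (T^[j+1] f).1 z - toFun (cpts Ω) (T^[j+1] g).1 z‖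
        ≤ C₁ * (C₂ * B) := hbound
    _ = C₁ * C₂ * B := by ring

/-- Basic neighbourhoods in `Hol Ω`. -/
lemma nbhd_ball (f : Hol Ω) {K : Set ℂ} (hK : K ∈ cpts Ω) {ε : ℝ} (hε : 0 < ε) :
    {g : Hol Ω | ∀ w ∈ K, ‖toFun (cpts Ω) f.1 w - toFun (cpts Ω) g.1 w‖ ≤ ε} ∈ 𝓝 f := by
  have hU : {p : ℂ × ℂ | dist p.1 p.2 < ε} ∈ 𝓤 ℂ := Metric.dist_mem_uniformity hε
  have hgen : UniformOnFun.gen (cpts Ω) K {p : ℂ × ℂ | dist p.1 p.2 < ε}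
      ∈ 𝓤 (ℂ →ᵤ[cpts Ω] ℂ) := UniformOnFun.gen_mem_uniformity ℂ (cpts Ω) hK hU
  have hball := UniformSpace.ball_mem_nhds (f.1 : ℂ →ᵤ[cpts Ω] ℂ) hgen
  have hpre := (continuous_subtype_val
    (p := fun x => x ∈ Hol Ω)).continuousAt.preimage_mem_nhds hball
  refine Filter.mem_of_superset hpre ?_
  intro g hg w hw
  have h2 := hg w hw
  simp only [Set.mem_setOf_eq] at h2
  rw [dist_eq_norm] at h2
  exact h2.le



lemma closed_En (hΩ : IsOpen Ω) (hΩ' : IsConnected Ω) (hζ₀ : ζ₀ ∈ Ω)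
    (T : Hol Ω → Hol Ω)
    (hT : ∀ f : Hol Ω, toFun (cpts Ω) (T f).1 ζ₀ = 0 ∧
      ∀ z ∈ Ω, HasDerivAt (toFun (cpts Ω) (T f).1) (toFun (cpts Ω) f.1 z) z)
    (k : ℕ) (n : ℝ) :
    IsClosed {f : Hol Ω | ∀ z ∈ Ω, ‖toFun (cpts Ω) (T^[k] f).1 z‖ ≤ n} := by
  apply isClosed_of_closure_subset
  intro f hf z hz
  obtain ⟨K, C, hG, hP⟩ := iter_bound hΩ hΩ' hζ₀ T hT k {z} isCompact_singleton
    (singleton_subset_iff.2 hz) ⟨z, rfl⟩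
  have hC1 : (0:ℝ) < C + 1 := by linarith [hG.2.2.2]
  by_contra hcon
  push_neg at hcon
  set ε : ℝ := (‖toFun (cpts Ω) (T^[k] f).1 z‖ - n) / (C + 1) with hε
  have hεpos : 0 < ε := div_pos (by linarith) hC1
  obtain ⟨g, hgV, hgE⟩ := mem_closure_iff_nhds.1 hf _ (nbhd_ball f ⟨hG.2.2.1, hG.2.1⟩ hεpos)
  have hb := hP f g ε hgV z rfl
  have h1 : ‖toFun (cpts Ω) (T^[k] g).1 z‖ ≤ n := hgE z hz
  have tri : ‖toFun (cpts Ω) (T^[k] f).1 z‖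
      ≤ ‖toFun (cpts Ω) (T^[k] g).1 z‖
        + ‖toFun (cpts Ω) (T^[k] f).1 z - toFun (cpts Ω) (T^[k] g).1 z‖ := by
    simpa using norm_add_le (toFun (cpts Ω) (T^[k] g).1 z)
      (toFun (cpts Ω) (T^[k] f).1 z - toFun (cpts Ω) (T^[k] g).1 z)
  have hCe : C * ε < (C + 1) * ε := by nlinarith
  have : (C + 1) * ε = ‖toFun (cpts Ω) (T^[k] f).1 z‖ - n := by
    rw [hε, mul_comm]; exact div_mul_cancel₀ _ hC1.ne'
  nlinarith

lemma iter_linear (hΩ : IsOpen Ω) (hΩ' : IsConnected Ω) (hζ₀ : ζ₀ ∈ Ω)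
    (T : Hol Ω → Hol Ω)
    (hT : ∀ f : Hol Ω, toFun (cpts Ω) (T f).1 ζ₀ = 0 ∧
      ∀ z ∈ Ω, HasDerivAt (toFun (cpts Ω) (T f).1) (toFun (cpts Ω) f.1 z) z)
    (f h : Hol Ω) (δ : ℂ) :
    ∀ (j : ℕ), ∀ z ∈ Ω, toFun (cpts Ω) (T^[j] (f + δ • h)).1 z
      = toFun (cpts Ω) (T^[j] f).1 z + δ * toFun (cpts Ω) (T^[j] h).1 z := by
  intro j
  induction j with
  | zero => intro z hz; rfl
  | succ j ih =>
    intro z hz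
    have h0 : (fun x => toFun (cpts Ω) (T^[j+1] (f + δ • h)).1 x
        - (toFun (cpts Ω) (T^[j+1] f).1 x + δ * toFun (cpts Ω) (T^[j+1] h).1 x)) ζ₀ = 0 := by
      simp only [Function.iterate_succ_apply']
      rw [(hT (T^[j] (f + δ • h))).1, (hT (T^[j] f)).1, (hT (T^[j] h)).1]
      ring
    have hd : ∀ w ∈ Ω, HasDerivAt (fun x => toFun (cpts Ω) (T^[j+1] (f + δ • h)).1 x
        - (toFun (cpts Ω) (T^[j+1] f).1 x + δ * toFun (cpts Ω) (T^[j+1] h).1 x)) 0 w := by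
      intro w hw
      rw [Function.iterate_succ_apply', Function.iterate_succ_apply',
        Function.iterate_succ_apply']
      have h1 := (hT (T^[j] (f + δ • h))).2 w hw
      have h2 := (hT (T^[j] f)).2 w hw
      have h3 := (hT (T^[j] h)).2 w hw
      have hcombo := h1.sub (h2.add (h3.const_mul δ))
      refine hcombo.congr_deriv ?_
      rw [ih w hw]; ring
    have := eq_zero_of_deriv_zero hΩ hΩ' hζ₀ h0 hd z hz
    exact sub_eq_zero.1 this


section
open Polynomial

lemma antider_derivative (q : Polynomial ℂ) :
    Polynomial.derivative (q.sum fun n a => Polynomial.C (a / (n+1)) * Polynomial.X ^ (n+1))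
      = q := by
  rw [Polynomial.sum_def, derivative_sum]
  have : ∀ n ∈ q.support, derivative (C (q.coeff n / (n+1)) * X ^ (n+1))
      = C (q.coeff n) * X ^ n := by
    intro n _
    rw [derivative_C_mul_X_pow]
    congr 1
    · congr 1
      have hne : ((n:ℂ) + 1) ≠ 0 := by
        have := Nat.cast_add_one_ne_zero (R := ℂ) n
        simpa using this
      push_cast
      field_simp
  rw [Finset.sum_congr rfl this]
  exact (Polynomial.sum_def q _).symm.trans q.sum_C_mul_X_pow_eq

end


lemma exists_unbounded (hΩ : IsOpen Ω) (hΩ' : IsConnected Ω) (hζ₀ : ζ₀ ∈ Ω)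
    (T : Hol Ω → Hol Ω)
    (hT : ∀ f : Hol Ω, toFun (cpts Ω) (T f).1 ζ₀ = 0 ∧
      ∀ z ∈ Ω, HasDerivAt (toFun (cpts Ω) (T f).1) (toFun (cpts Ω) f.1 z) z)
    {k : ℕ} (hk : 1 ≤ k) :
    ∃ h : Hol Ω, ∀ C : ℝ, ∃ z ∈ Ω, C < ‖toFun (cpts Ω) (T^[k] h).1 z‖ := by
  by_cases hb : Bornology.IsBounded Ω
  · -- Ω bounded: take a pole just outside Ω
    have hne_univ : Ω ≠ univ := by
      intro huniv
      obtain ⟨R, hR⟩ := hb.subset_closedBall 0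
      have h1 : ((|R| + 1 : ℝ) : ℂ) ∈ Metric.closedBall (0:ℂ) R := by
        apply hR; rw [huniv]; trivial
      rw [Metric.mem_closedBall, dist_zero_right] at h1
      rw [Complex.norm_real, Real.norm_eq_abs] at h1
      have h2 := le_abs_self R
      have h3 := abs_nonneg R
      have h4 : |(|R| + 1)| = |R| + 1 := abs_of_pos (by positivity)
      rw [h4] at h1
      linarith
    obtain ⟨w, hwcl, hwΩ⟩ : ∃ w, w ∈ closure Ω ∧ w ∉ Ω := by
      by_contra hcon
      push_neg at hcon
      have hclosed : IsClosed Ω := isClosed_of_closure_subset fun x hx => hcon x hx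
      have huniv : (univ : Set ℂ) ⊆ Ω :=
        (convex_univ : Convex ℝ (univ : Set ℂ)).isPreconnected.subset_isClopen
          ⟨hclosed, hΩ⟩ ⟨ζ₀, trivial, hζ₀⟩
      exact hne_univ (eq_univ_of_univ_subset huniv)
    have hdiff : (ofFun (cpts Ω) (fun z : ℂ => (z - w) ^ (-(k:ℤ) - 1))) ∈ Hol Ω := by
      intro z hz
      have hne : z - w ≠ 0 := sub_ne_zero.2 fun hzw => hwΩ (hzw ▸ hz)
      exact ((differentiableAt_id.sub_const w).zpow (Or.inl hne)).differentiableWithinAt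
    set hh : Hol Ω := ⟨ofFun (cpts Ω) (fun z : ℂ => (z - w) ^ (-(k:ℤ) - 1)), hdiff⟩ with hhh
    have claim : ∀ j : ℕ, j ≤ k → ∃ (c : ℂ) (q : Polynomial ℂ), c ≠ 0 ∧
        ∀ z ∈ Ω, toFun (cpts Ω) (T^[j] hh).1 z
          = c * (z - w) ^ ((j:ℤ) - k - 1) + Polynomial.eval z q := by
      intro j
      induction j with
      | zero =>
        intro _
        refine ⟨1, 0, one_ne_zero, fun z hz => ?_⟩
        have hexp : ((0:ℕ):ℤ) - k - 1 = -(k:ℤ) - 1 := by push_cast; ring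
        rw [Function.iterate_zero_apply, hexp]
        show (z - w) ^ (-(k:ℤ) - 1) = 1 * (z - w) ^ (-(k:ℤ) - 1) + Polynomial.eval z 0
        simp
      | succ j ih =>
        intro hjk
        obtain ⟨c, q, hc, heq⟩ := ih (Nat.le_of_succ_le hjk)
        set m : ℤ := (j:ℤ) - k - 1 with hm
        have hm1 : m + 1 ≠ 0 := by omega
        have hm1C : ((m:ℂ) + 1) ≠ 0 := by
          have h5 : ((m + 1 : ℤ) : ℂ) ≠ 0 := Int.cast_ne_zero.2 hm1
          push_cast at h5; exact h5
        set c' : ℂ := c / ((m:ℂ) + 1) with hc'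
        set Q : Polynomial ℂ :=
          q.sum (fun n a => Polynomial.C (a / (n+1)) * Polynomial.X ^ (n+1)) with hQ
        have hQd : Polynomial.derivative Q = q := antider_derivative q
        set q' : Polynomial ℂ :=
          Q - Polynomial.C (c' * (ζ₀ - w) ^ (m+1) + Polynomial.eval ζ₀ Q) with hq'
        have hA0 : c' * (ζ₀ - w) ^ (m + 1) + Polynomial.eval ζ₀ q' = 0 := by
          rw [hq']
          simp only [Polynomial.eval_sub, Polynomial.eval_C]
          ring
        have hAd : ∀ z ∈ Ω, HasDerivAt
            (fun x => c' * (x - w) ^ (m + 1) + Polynomial.eval x q')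
            (c * (z - w) ^ m + Polynomial.eval z q) z := by
          intro z hz
          have hne : z - w ≠ 0 := sub_ne_zero.2 fun hzw => hwΩ (hzw ▸ hz)
          have h1 : HasDerivAt (fun x : ℂ => (x - w) ^ (m+1))
              ((((m+1 : ℤ)):ℂ) * (z - w) ^ (m + 1 - 1) * 1) z :=
            by have h := HasDerivAt.comp z (hasDerivAt_zpow (m+1) (z-w) (Or.inl hne))
                ((hasDerivAt_id z).sub_const w)
               exact h
          have h2 : HasDerivAt (fun x : ℂ => Polynomial.eval x q')
              (Polynomial.eval z q) z := by
            have h3 := Polynomial.hasDerivAt q' z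
            have h4 : Polynomial.derivative q' = q := by
              rw [hq']; simp [hQd]
            rwa [h4] at h3
          have hcombo := (h1.const_mul c').add h2
          refine hcombo.congr_deriv ?_
          rw [add_sub_cancel_right, hc']
          push_cast
          field_simp
        refine ⟨c', q', div_ne_zero hc hm1C, fun z hz => ?_⟩
        have h0 : (fun x => toFun (cpts Ω) (T^[j+1] hh).1 x
            - (c' * (x - w) ^ (m + 1) + Polynomial.eval x q')) ζ₀ = 0 := by
          simp only [Function.iterate_succ_apply']
          rw [(hT (T^[j] hh)).1, hA0]
          ring
        have hd : ∀ x ∈ Ω, HasDerivAt (fun x => toFun (cpts Ω) (T^[j+1] hh).1 x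
            - (c' * (x - w) ^ (m + 1) + Polynomial.eval x q')) 0 x := by
          intro x hx
          rw [Function.iterate_succ_apply']
          have h6 := ((hT (T^[j] hh)).2 x hx).sub (hAd x hx)
          refine h6.congr_deriv ?_
          rw [heq x hx]
          ring
        have hz0 := eq_zero_of_deriv_zero hΩ hΩ' hζ₀ h0 hd z hz
        have h7 := sub_eq_zero.1 hz0
        have hexp : ((j+1:ℕ):ℤ) - k - 1 = m + 1 := by rw [hm]; push_cast; ring
        rw [hexp, h7]
    obtain ⟨c, q, hc, heq⟩ := claim k le_rfl
    have hexp : (k:ℤ) - k - 1 = -1 := by ring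
    refine ⟨hh, fun C => ?_⟩
    obtain ⟨M, hM⟩ := (isCompact_closedBall w 1).exists_bound_of_continuousOn
      q.continuous.continuousOn
    have hcpos : 0 < ‖c‖ := norm_pos_iff.2 hc
    set D : ℝ := |C| + |M| + 1 with hD
    have hDpos : 0 < D := by positivity
    set ε : ℝ := min 1 (‖c‖ / D) with hε
    have hεpos : 0 < ε := lt_min one_pos (by positivity)
    obtain ⟨z, hzΩ, hdist⟩ := Metric.mem_closure_iff.1 hwcl ε hεpos
    have hzw : z - w ≠ 0 := sub_ne_zero.2 fun h => hwΩ (h ▸ hzΩ)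
    have ha : ‖z - w‖ < ε := by
      rw [show ‖z - w‖ = dist w z by rw [dist_eq_norm, norm_sub_rev]]
      exact hdist
    have hapos : 0 < ‖z - w‖ := norm_pos_iff.2 hzw
    have hzball : z ∈ Metric.closedBall w 1 := by
      rw [Metric.mem_closedBall, dist_eq_norm]
      exact (ha.trans_le (min_le_left _ _)).le
    have hMz : ‖Polynomial.eval z q‖ ≤ M := hM z hzball
    refine ⟨z, hzΩ, ?_⟩
    rw [heq z hzΩ, hexp]
    have hval : ‖c * (z - w) ^ (-1:ℤ)‖ = ‖c‖ / ‖z - w‖ := by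
      rw [norm_mul, zpow_neg, zpow_one, norm_inv, div_eq_mul_inv]
    have htri : ‖c * (z - w) ^ (-1:ℤ)‖
        ≤ ‖c * (z - w) ^ (-1:ℤ) + Polynomial.eval z q‖ + ‖Polynomial.eval z q‖ := by
      simpa using norm_add_le (c * (z - w) ^ (-1:ℤ) + Polynomial.eval z q)
        (-(Polynomial.eval z q))
    have hgt : D < ‖c‖ / ‖z - w‖ := by
      have h1 : ‖z - w‖ < ‖c‖ / D := ha.trans_le (min_le_right _ _)
      calc D = ‖c‖ / (‖c‖ / D) := by
              rw [div_div_eq_mul_div, mul_comm, mul_div_assoc, div_self hcpos.ne', mul_one]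
      _ < ‖c‖ / ‖z - w‖ := div_lt_div_of_pos_left hcpos hapos h1
    have h2 := le_abs_self C
    have h3 := le_abs_self M
    rw [hval] at htri
    rw [hD] at hgt
    linarith
  · -- Ω unbounded: take the constant 1
    have hmem : (ofFun (cpts Ω) (fun _ : ℂ => (1:ℂ))) ∈ Hol Ω := differentiableOn_const 1
    set one : Hol Ω := ⟨ofFun (cpts Ω) (fun _ : ℂ => (1:ℂ)), hmem⟩ with hone
    have hiter : ∀ j : ℕ, ∀ z ∈ Ω, toFun (cpts Ω) (T^[j] one).1 z
        = (z - ζ₀) ^ j / (j.factorial : ℂ) := by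
      intro j
      induction j with
      | zero =>
        intro z hz
        show (1:ℂ) = (z - ζ₀) ^ 0 / ((1:ℕ) : ℂ)
        simp
      | succ j ih =>
        have h0 : (fun x => toFun (cpts Ω) (T^[j+1] one).1 x
            - (x - ζ₀) ^ (j+1) / ((j+1).factorial : ℂ)) ζ₀ = 0 := by
          simp only [Function.iterate_succ_apply']
          rw [(hT (T^[j] one)).1]
          simp
        have hd : ∀ w ∈ Ω, HasDerivAt (fun x => toFun (cpts Ω) (T^[j+1] one).1 x
            - (x - ζ₀) ^ (j+1) / ((j+1).factorial : ℂ)) 0 w := by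
          intro w hw
          have hp : HasDerivAt (fun x : ℂ => (x - ζ₀) ^ (j+1) / ((j+1).factorial : ℂ))
              (((((j+1:ℕ)):ℂ) * (w - ζ₀) ^ (j + 1 - 1) * 1) / ((j+1).factorial : ℂ)) w :=
            (((hasDerivAt_id w).sub_const ζ₀).pow (j+1)).div_const _
          rw [Function.iterate_succ_apply']
          have hcombo := ((hT (T^[j] one)).2 w hw).sub hp
          refine hcombo.congr_deriv ?_
          rw [ih w hw]
          have hfac : (((j+1).factorial : ℂ)) = ((j+1 : ℕ) : ℂ) * (j.factorial : ℂ) := by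
            rw [Nat.factorial_succ]; push_cast; ring
          have h1 : ((j.factorial : ℕ) : ℂ) ≠ 0 := Nat.cast_ne_zero.2 j.factorial_ne_zero
          have h2 : ((j+1 : ℕ) : ℂ) ≠ 0 := Nat.cast_ne_zero.2 (Nat.succ_ne_zero j)
          rw [hfac]
          simp only [Nat.add_sub_cancel, mul_one]
          rw [mul_div_mul_left ((w - ζ₀) ^ j) _ h2, sub_self]
        intro z hz
        exact sub_eq_zero.1 (eq_zero_of_deriv_zero hΩ hΩ' hζ₀ h0 hd z hz)
    refine ⟨one, fun C => ?_⟩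
    have hfacpos : (0:ℝ) < (k.factorial : ℝ) := by
      exact_mod_cast k.factorial_pos
    set R : ℝ := ‖ζ₀‖ + max 1 (C * (k.factorial : ℝ) + 1) with hR
    obtain ⟨z, hzΩ, hzn⟩ : ∃ z ∈ Ω, R < ‖z‖ := by
      by_contra hcon
      push_neg at hcon
      exact hb ((Metric.isBounded_iff_subset_closedBall 0).2
        ⟨R, fun z hz => by rw [Metric.mem_closedBall, dist_zero_right]; exact hcon z hz⟩)
    refine ⟨z, hzΩ, ?_⟩
    rw [hiter k z hzΩ]
    have hnorm : ‖(z - ζ₀) ^ k / ((k.factorial : ℕ) : ℂ)‖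
        = ‖z - ζ₀‖ ^ k / (k.factorial : ℝ) := by
      rw [norm_div, norm_pow]
      congr 1
      rw [Complex.norm_natCast]
    rw [hnorm]
    have h1 : ‖z‖ - ‖ζ₀‖ ≤ ‖z - ζ₀‖ := norm_sub_norm_le z ζ₀
    have h2 : max 1 (C * (k.factorial : ℝ) + 1) < ‖z - ζ₀‖ := by
      rw [hR] at hzn; linarith
    have h3 : 1 ≤ ‖z - ζ₀‖ := ((le_max_left _ _).trans_lt h2).le
    have h4 : C * (k.factorial : ℝ) + 1 ≤ ‖z - ζ₀‖ := ((le_max_right _ _).trans_lt h2).le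
    have h5 : ‖z - ζ₀‖ ≤ ‖z - ζ₀‖ ^ k := le_self_pow₀ h3 (by omega)
    rw [lt_div_iff₀ hfacpos]
    linarith

end Stmt6Aux

open Stmt6Aux in
theorem stmt6 (Ω : Set ℂ) (hΩ : IsOpen Ω) (hΩ' : IsConnected Ω)
    (hsc : SimplyConnectedSpace Ω) (ζ₀ : ℂ) (hζ₀ : ζ₀ ∈ Ω)
    (T : Hol Ω → Hol Ω)
    (hT : ∀ f : Hol Ω, toFun (cpts Ω) (T f).1 ζ₀ = 0 ∧
      ∀ z ∈ Ω, HasDerivAt (toFun (cpts Ω) (T f).1) (toFun (cpts Ω) f.1 z) z)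
    (k : ℕ) (hk : 1 ≤ k) :
    IsMeagre {f : Hol Ω |
      ∃ C : ℝ, ∀ z ∈ Ω, ‖toFun (cpts Ω) ((T^[k]) f).1 z‖ ≤ C} := by
  set E : ℕ → Set (Hol Ω) := fun n =>
    {f : Hol Ω | ∀ z ∈ Ω, ‖toFun (cpts Ω) (T^[k] f).1 z‖ ≤ n} with hE
  have hclosed : ∀ n : ℕ, IsClosed (E n) := fun n => closed_En hΩ hΩ' hζ₀ T hT k n
  have hint : ∀ n : ℕ, interior (E n) = ∅ := by
    intro n
    rw [Set.eq_empty_iff_forall_notMem]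
    intro f hf
    obtain ⟨h, hh⟩ := Stmt6Aux.exists_unbounded hΩ hΩ' hζ₀ T hT hk
    have hcont : Filter.Tendsto (fun δ : ℂ => f + δ • h) (𝓝 0) (𝓝 f) := by
      rw [tendsto_subtype_rng]
      rw [UniformOnFun.tendsto_iff_tendstoUniformlyOn]
      intro K hK
      rw [Metric.tendstoUniformlyOn_iff]
      intro ε hε
      have hd : DifferentiableOn ℂ (toFun (cpts Ω) h.1) Ω := h.2
      obtain ⟨M, hM⟩ := hK.2.exists_bound_of_continuousOn (hd.continuousOn.mono hK.1)
      have hM1 : (0:ℝ) < max M 1 := lt_of_lt_of_le one_pos (le_max_right _ _)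
      have hev : ∀ᶠ δ : ℂ in 𝓝 0, ‖δ‖ < ε / max M 1 := by
        filter_upwards [Metric.ball_mem_nhds (0:ℂ) (div_pos hε hM1)] with δ hδ
        simpa [mem_ball_zero_iff] using hδ
      filter_upwards [hev] with δ hδ x hx
      have hxval : toFun (cpts Ω) ((f + δ • h) : Hol Ω).1 x
          = toFun (cpts Ω) f.1 x + δ * toFun (cpts Ω) h.1 x := rfl
      rw [dist_eq_norm]
      simp only [Function.comp_apply]
      rw [hxval]
      have heq : toFun (cpts Ω) f.1 x - (toFun (cpts Ω) f.1 x + δ * toFun (cpts Ω) h.1 x)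
          = -(δ * toFun (cpts Ω) h.1 x) := by ring
      rw [heq, norm_neg, norm_mul]
      have hb1 : ‖toFun (cpts Ω) h.1 x‖ ≤ max M 1 := (hM x hx).trans (le_max_left _ _)
      calc ‖δ‖ * ‖toFun (cpts Ω) h.1 x‖ ≤ ‖δ‖ * max M 1 :=
            mul_le_mul_of_nonneg_left hb1 (norm_nonneg δ)
      _ < (ε / max M 1) * max M 1 := mul_lt_mul_of_pos_right hδ hM1
      _ = ε := div_mul_cancel₀ ε hM1.ne'
    have hpre : ∀ᶠ δ : ℂ in 𝓝 (0:ℂ), f + δ • h ∈ interior (E n) :=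
      hcont.eventually (isOpen_interior.eventually_mem hf)
    have hpre' : ∀ᶠ δ : ℂ in 𝓝[≠] (0:ℂ), f + δ • h ∈ E n :=
      (hpre.filter_mono nhdsWithin_le_nhds).mono fun δ hδ => interior_subset hδ
    obtain ⟨δ, hδE, hδ0⟩ := (hpre'.and eventually_mem_nhdsWithin).exists
    have hδpos : 0 < ‖δ‖ := norm_pos_iff.2 hδ0
    obtain ⟨z, hz, hgt⟩ := hh (((n:ℝ) + n) / ‖δ‖)
    have hlin := iter_linear hΩ hΩ' hζ₀ T hT f h δ k z hz
    have h1 : ‖toFun (cpts Ω) (T^[k] (f + δ • h)).1 z‖ ≤ n := hδE z hz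
    have h2 : ‖toFun (cpts Ω) (T^[k] f).1 z‖ ≤ n := interior_subset hf z hz
    have h3 : ‖δ * toFun (cpts Ω) (T^[k] h).1 z‖ ≤ (n:ℝ) + n := by
      have heq2 : δ * toFun (cpts Ω) (T^[k] h).1 z
          = toFun (cpts Ω) (T^[k] (f + δ • h)).1 z - toFun (cpts Ω) (T^[k] f).1 z := by
        rw [hlin]; ring
      rw [heq2]
      exact (norm_sub_le _ _).trans (add_le_add h1 h2)
    rw [norm_mul] at h3
    have h4 : ‖toFun (cpts Ω) (T^[k] h).1 z‖ ≤ ((n:ℝ) + n) / ‖δ‖ :=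
      (le_div_iff₀ hδpos).2 (by rw [mul_comm] at h3; exact h3)
    linarith
  have hmeagre : ∀ n : ℕ, IsMeagre (E n) := fun n =>
    residual_of_dense_open (hclosed n).isOpen_compl
      (interior_eq_empty_iff_dense_compl.1 (hint n))
  have hsub : {f : Hol Ω |
      ∃ C : ℝ, ∀ z ∈ Ω, ‖toFun (cpts Ω) ((T^[k]) f).1 z‖ ≤ C}
      ⊆ ⋃ n : ℕ, E n := by
    rintro f ⟨C, hC⟩
    refine Set.mem_iUnion.2 ⟨⌈C⌉₊, fun z hz => ?_⟩
    have h5 := hC z hz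
    exact h5.trans (Nat.le_ceil C)
  exact (isMeagre_iUnion hmeagre).mono hsub
end
end

section
/- Let V be a topological vector space over ℝ or ℂ, X a nonempty set, and T : V → (functions X → ℂ) a linear operator such that for every x ∈ X the map α ↦ T(α)(x) is continuous on V. Let S = {α ∈ V : T(α) is unbounded on X}. Then either S = ∅ or S is a dense G_δ subset of V. -/
theorem stmt18 (𝕜 : Type*) [RCLike 𝕜] [Algebra 𝕜 ℂ]
    (V : Type*) [AddCommGroup V] [Module 𝕜 V] [TopologicalSpace V]
    [IsTopologicalAddGroup V] [ContinuousSMul 𝕜 V]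
    (X : Type*) [Nonempty X]
    (T : V →ₗ[𝕜] (X → ℂ))
    (hT : ∀ x : X, Continuous fun a : V => T a x)
    (S : Set V)
    (hS : S = {a : V | ¬ ∃ C : ℝ, ∀ x : X, ‖T a x‖ ≤ C}) :
    S = ∅ ∨ (Dense S ∧ IsGδ S) := by
  rcases Set.eq_empty_or_nonempty S with h | ⟨β, hβ⟩
  · exact Or.inl h
  right
  have hSeq : S = ⋂ m : ℕ, ⋃ x : X, {a : V | (m : ℝ) < ‖T a x‖} := by
    rw [hS]
    ext a
    simp only [Set.mem_setOf_eq, Set.mem_iInter, Set.mem_iUnion]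
    constructor
    · intro h m
      by_contra hm
      push_neg at hm
      exact h ⟨m, fun x => le_of_not_gt (by simpa using hm x)⟩
    · rintro h ⟨C, hC⟩
      obtain ⟨m, hm⟩ := exists_nat_ge C
      obtain ⟨x, hx⟩ := h m
      exact absurd (le_trans (hC x) hm) (not_le.mpr hx)
  constructor
  · -- Density
    rw [dense_iff_closure_eq]
    ext a
    simp only [Set.mem_univ, iff_true]
    by_cases ha : a ∈ S
    · exact subset_closure ha
    -- a ∉ S means T a is bounded
    rw [hS] at ha hβ
    simp only [Set.mem_setOf_eq, not_not] at ha
    simp only [Set.mem_setOf_eq] at hβ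
    obtain ⟨C, hC⟩ := ha
    have key : ∀ c : 𝕜, c ≠ 0 → a + c • β ∈ S := by
      intro c hc
      rw [hS]
      rintro ⟨D, hD⟩
      apply hβ
      have hac : (algebraMap 𝕜 ℂ c) ≠ 0 := by
        simpa using ((algebraMap 𝕜 ℂ).injective).ne hc
      refine ⟨(D + C) / ‖algebraMap 𝕜 ℂ c‖, fun x => ?_⟩
      have h1 : T (a + c • β) x = T a x + (algebraMap 𝕜 ℂ c) * T β x := by
        simp [map_add, map_smul, Algebra.smul_def]
      have h2 : ‖(algebraMap 𝕜 ℂ c) * T β x‖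
          = ‖T (a + c • β) x - T a x‖ := by rw [h1]; ring_nf
      have h3 : ‖algebraMap 𝕜 ℂ c‖ * ‖T β x‖ ≤ D + C := by
        rw [← norm_mul, h2]
        calc ‖T (a + c • β) x - T a x‖
            ≤ ‖T (a + c • β) x‖ + ‖T a x‖ :=
              norm_sub_le _ _
          _ ≤ D + C := add_le_add (hD x) (hC x)
      have hpos : 0 < ‖algebraMap 𝕜 ℂ c‖ := by
        simpa [norm_pos_iff] using hac
      rw [le_div_iff₀ hpos, mul_comm]
      exact h3
    -- a + c • β → a as c → 0 along punctured neighborhood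
    have htend : Filter.Tendsto (fun c : 𝕜 => a + c • β) (nhdsWithin 0 {0}ᶜ) (nhds a) := by
      have : Filter.Tendsto (fun c : 𝕜 => a + c • β) (nhds 0) (nhds a) := by
        have hcont : Continuous (fun c : 𝕜 => a + c • β) := by continuity
        have := hcont.tendsto 0
        simpa using this
      exact this.mono_left nhdsWithin_le_nhds
    refine mem_closure_of_tendsto htend ?_
    filter_upwards [self_mem_nhdsWithin] with c hc
    exact key c hc
  · -- Gδ
    rw [hSeq]
    refine .iInter_of_isOpen fun m => isOpen_iUnion fun x => ?_
    exact isOpen_lt continuous_const ((continuous_norm).comp (hT x))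
end
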